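/- arXiv:1309.0479 — 4 statements merged into one kernel-verified Lean document; each statement's English description precedes it below -/
import Mathlib

section
/- If a is any positive integer, then for every positive integer n with n > 14.4a (equivalently 5n > 72a) there exists a pair of prime numbers p and q such that n < a·p < 3n/2 < a·q < 2n (equivalently, 2n < 2ap < 3n < 2aq < 4n). -/
open Finset Nat

namespace NaguraAux

/-- Legendre in factorization form -/
lemma fact_factorization {p : ℕ} (hp : p.Prime) (n b : ℕ) (hb : Nat.log p n < b) :
    (Nat.factorial n).factorization p = ∑ i ∈ Finset.Ico 1 b, n / p ^ i := by
  haveI : Fact p.Prime := ⟨hp⟩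
  rw [Nat.factorization_def _ hp]
  exact padicValNat_factorial hb

-- pointwise bounds for a = p^i
lemma point_low (M a : ℕ) : 15*M/a + 10*M/a + 6*M/a ≤ 30*M/a + M/a := by
  rcases Nat.eq_zero_or_pos a with rfl|ha
  · simp
  have h2 : 15*M/a = (30*M/a)/2 := by
    rw [Nat.div_div_eq_div_mul]
    rw [show a*2 = 2*a by ring, show 30*M = 2*(15*M) by ring, Nat.mul_div_mul_left _ _ (by norm_num)]
  have h3 : 10*M/a = (30*M/a)/3 := by
    rw [Nat.div_div_eq_div_mul]
    rw [show a*3 = 3*a by ring, show 30*M = 3*(10*M) by ring, Nat.mul_div_mul_left _ _ (by norm_num)]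
  have h5 : 6*M/a = (30*M/a)/5 := by
    rw [Nat.div_div_eq_div_mul]
    rw [show a*5 = 5*a by ring, show 30*M = 5*(6*M) by ring, Nat.mul_div_mul_left _ _ (by norm_num)]
  have h30 : M/a = (30*M/a)/30 := by
    rw [Nat.div_div_eq_div_mul]
    rw [show a*30 = 30*a by ring, show 30*M = 30*(1*M) by ring, Nat.mul_div_mul_left _ _ (by norm_num), one_mul]
  rw [h2, h3, h5, h30]
  omega

lemma point_high (M a : ℕ) : 30*M/a + M/a ≤ 15*M/a + 10*M/a + 6*M/a + 1 := by
  rcases Nat.eq_zero_or_pos a with rfl|ha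
  · simp
  have h2 : 15*M/a = (30*M/a)/2 := by
    rw [Nat.div_div_eq_div_mul]
    rw [show a*2 = 2*a by ring, show 30*M = 2*(15*M) by ring, Nat.mul_div_mul_left _ _ (by norm_num)]
  have h3 : 10*M/a = (30*M/a)/3 := by
    rw [Nat.div_div_eq_div_mul]
    rw [show a*3 = 3*a by ring, show 30*M = 3*(10*M) by ring, Nat.mul_div_mul_left _ _ (by norm_num)]
  have h5 : 6*M/a = (30*M/a)/5 := by
    rw [Nat.div_div_eq_div_mul]
    rw [show a*5 = 5*a by ring, show 30*M = 5*(6*M) by ring, Nat.mul_div_mul_left _ _ (by norm_num)]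
  have h30 : M/a = (30*M/a)/30 := by
    rw [Nat.div_div_eq_div_mul]
    rw [show a*30 = 30*a by ring, show 30*M = 30*(1*M) by ring, Nat.mul_div_mul_left _ _ (by norm_num), one_mul]
  rw [h2, h3, h5, h30]
  omega

lemma point_eq (M a : ℕ) (h1 : a ≤ 30*M) (h2 : 30*M < 6*a) (ha : 0 < a) :
    30*M/a + M/a = 15*M/a + 10*M/a + 6*M/a + 1 := by
  have h2' : 15*M/a = (30*M/a)/2 := by
    rw [Nat.div_div_eq_div_mul]
    rw [show a*2 = 2*a by ring, show 30*M = 2*(15*M) by ring, Nat.mul_div_mul_left _ _ (by norm_num)]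
  have h3 : 10*M/a = (30*M/a)/3 := by
    rw [Nat.div_div_eq_div_mul]
    rw [show a*3 = 3*a by ring, show 30*M = 3*(10*M) by ring, Nat.mul_div_mul_left _ _ (by norm_num)]
  have h5 : 6*M/a = (30*M/a)/5 := by
    rw [Nat.div_div_eq_div_mul]
    rw [show a*5 = 5*a by ring, show 30*M = 5*(6*M) by ring, Nat.mul_div_mul_left _ _ (by norm_num)]
  have h30 : M/a = (30*M/a)/30 := by
    rw [Nat.div_div_eq_div_mul]
    rw [show a*30 = 30*a by ring, show 30*M = 30*(1*M) by ring, Nat.mul_div_mul_left _ _ (by norm_num), one_mul]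
  have hs1 : 1 ≤ 30*M/a := (Nat.one_le_div_iff ha).mpr h1
  have hs6 : 30*M/a < 6 := Nat.div_lt_of_lt_mul (by omega)
  rw [h2', h3, h5, h30]
  omega

def v (p n : ℕ) : ℕ := (Nat.factorial n).factorization p

lemma v_sum {p : ℕ} (hp : p.Prime) (n b : ℕ) (hb : Nat.log p n < b) :
    v p n = ∑ i ∈ Finset.Ico 1 b, n / p ^ i := fact_factorization hp n b hb

lemma log_lt_b {p : ℕ} (hp : p.Prime) {n m : ℕ} (hnm : n ≤ m) : Nat.log p n < m + 1 :=
  lt_of_le_of_lt (le_trans (Nat.log_mono_right hnm) (Nat.log_le_self _ _)) (Nat.lt_succ_self m)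

lemma E1 {p : ℕ} (hp : p.Prime) (M : ℕ) :
    v p (15*M) + v p (10*M) + v p (6*M) ≤ v p (30*M) + v p M := by
  set b := 30*M + 1 with hb
  rw [v_sum hp _ b (log_lt_b hp (by omega)), v_sum hp _ b (log_lt_b hp (by omega)),
      v_sum hp _ b (log_lt_b hp (by omega)), v_sum hp _ b (log_lt_b hp (by omega)),
      v_sum hp _ b (log_lt_b hp (by omega))]
  rw [← Finset.sum_add_distrib, ← Finset.sum_add_distrib, ← Finset.sum_add_distrib]
  exact Finset.sum_le_sum fun i _ => point_low M (p ^ i)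

lemma E2 {p : ℕ} (hp : p.Prime) (M : ℕ) (h5 : 5*M < p) (h30 : p ≤ 30*M) :
    v p (15*M) + v p (10*M) + v p (6*M) + 1 ≤ v p (30*M) + v p M := by
  set b := 30*M + 1 with hb
  have hb2 : 1 < b := by
    have := hp.two_le; omega
  rw [v_sum hp _ b (log_lt_b hp (by omega)), v_sum hp _ b (log_lt_b hp (by omega)),
      v_sum hp _ b (log_lt_b hp (by omega)), v_sum hp _ b (log_lt_b hp (by omega)),
      v_sum hp _ b (log_lt_b hp (by omega))]
  rw [← Finset.sum_add_distrib, ← Finset.sum_add_distrib, ← Finset.sum_add_distrib]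
  rw [Finset.sum_eq_sum_Ico_succ_bot hb2, Finset.sum_eq_sum_Ico_succ_bot hb2 (f := fun i => 30*M/p^i + M/p^i)]
  have hpt : 15*M/p^1 + 10*M/p^1 + 6*M/p^1 + 1 ≤ 30*M/p^1 + M/p^1 := by
    rw [pow_one]
    rw [point_eq M p h30 (by omega) hp.pos]
  have hrest : ∑ i ∈ Finset.Ico (1+1) b, (15*M/p^i + 10*M/p^i + 6*M/p^i)
      ≤ ∑ i ∈ Finset.Ico (1+1) b, (30*M/p^i + M/p^i) :=
    Finset.sum_le_sum fun i _ => point_low M (p ^ i)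
  omega

lemma E3 {p : ℕ} (hp : p.Prime) (M : ℕ) :
    v p (30*M) + v p M ≤ v p (15*M) + v p (10*M) + v p (6*M) + Nat.log p (30*M) := by
  set b := Nat.log p (30*M) + 1 with hb
  rw [v_sum hp _ b (by omega), v_sum hp _ b (lt_of_le_of_lt (Nat.log_mono_right (by omega)) (Nat.lt_succ_self _)),
      v_sum hp _ b (lt_of_le_of_lt (Nat.log_mono_right (by omega)) (Nat.lt_succ_self _)),
      v_sum hp _ b (lt_of_le_of_lt (Nat.log_mono_right (by omega)) (Nat.lt_succ_self _)),
      v_sum hp _ b (lt_of_le_of_lt (Nat.log_mono_right (by omega)) (Nat.lt_succ_self _))]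
  rw [← Finset.sum_add_distrib, ← Finset.sum_add_distrib, ← Finset.sum_add_distrib]
  calc ∑ i ∈ Finset.Ico 1 b, (30*M/p^i + M/p^i)
      ≤ ∑ i ∈ Finset.Ico 1 b, (15*M/p^i + 10*M/p^i + 6*M/p^i + 1) :=
        Finset.sum_le_sum fun i _ => point_high M (p ^ i)
    _ = (∑ i ∈ Finset.Ico 1 b, (15*M/p^i + 10*M/p^i + 6*M/p^i)) + (b - 1) := by
        rw [Finset.sum_add_distrib, Finset.sum_const, Nat.card_Ico, smul_eq_mul, mul_one]
    _ = _ := by omega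

def D (M : ℕ) : ℕ := (15*M)! * ((10*M)! * (6*M)!)

lemma D_pos (M : ℕ) : 0 < D M :=
  Nat.mul_pos (Nat.factorial_pos _) (Nat.mul_pos (Nat.factorial_pos _) (Nat.factorial_pos _))

lemma D_factorization {p : ℕ} (hp : p.Prime) (M : ℕ) :
    (D M).factorization p = v p (15*M) + v p (10*M) + v p (6*M) := by
  unfold D v
  rw [Nat.factorization_mul (by positivity) (by positivity),
      Nat.factorization_mul (by positivity) (by positivity)]
  simp [add_assoc]

lemma Nbig_factorization {p : ℕ} (hp : p.Prime) (M : ℕ) :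
    ((30*M)! * M !).factorization p = v p (30*M) + v p M := by
  unfold v
  rw [Nat.factorization_mul (by positivity) (by positivity)]; simp

/-- The set of primes in (5M, 30M]. -/
def S (M : ℕ) : Finset ℕ := (Finset.Ico (5*M+1) (30*M+1)).filter Nat.Prime

def P (M : ℕ) : ℕ := ∏ p ∈ S M, p

lemma P_factorization (M : ℕ) (p0 : ℕ) :
    (P M).factorization p0 = if p0 ∈ S M then 1 else 0 := by
  unfold P
  rw [Nat.factorization_prod (fun q hq => (Finset.mem_filter.mp hq).2.pos.ne')]
  rw [Finsupp.finset_sum_apply]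
  have hcong : ∀ q ∈ S M, q.factorization p0 = if q = p0 then 1 else 0 := fun q hq => by
    rw [(Finset.mem_filter.mp hq).2.factorization, Finsupp.single_apply]
  rw [Finset.sum_congr rfl hcong, Finset.sum_ite_eq' (S M) p0 (fun _ => 1)]

lemma primorial_split (M : ℕ) : primorial (30*M) = primorial (5*M) * P M := by
  have h := primorial_add (5*M) (25*M)
  rw [show 5*M + 25*M = 30*M by ring] at h
  rw [h]
  congr 1

/-- Main upper recursion inequality (U'). -/
lemma U' (M : ℕ) : primorial (30*M) * D M ≤ primorial (5*M) * ((30*M)! * M !) := by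
  rw [primorial_split M, mul_assoc]
  refine Nat.mul_le_mul_left _ ?_
  refine Nat.le_of_dvd (Nat.mul_pos (Nat.factorial_pos _) (Nat.factorial_pos _)) ?_
  have hne : P M * D M ≠ 0 :=
    (Nat.mul_pos (Finset.prod_pos fun q hq => (Finset.mem_filter.mp hq).2.pos) (D_pos M)).ne'
  rw [← Nat.factorization_le_iff_dvd hne (Nat.mul_pos (Nat.factorial_pos _) (Nat.factorial_pos _)).ne']
  rw [Finsupp.le_def]
  intro p0
  by_cases hp0 : p0.Prime
  · have hPne : P M ≠ 0 := (Finset.prod_pos fun q hq => (Finset.mem_filter.mp hq).2.pos).ne'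
    rw [Nat.factorization_mul hPne (D_pos M).ne']
    have : (P M).factorization p0 + (D M).factorization p0
        ≤ (((30*M))! * M !).factorization p0 := by
      rw [P_factorization, D_factorization hp0, Nbig_factorization hp0]
      by_cases hmem : p0 ∈ S M
      · simp only [hmem, if_true]
        have h5 : 5*M < p0 := by have := (Finset.mem_filter.mp hmem).1; simp at this; omega
        have h30 : p0 ≤ 30*M := by have := (Finset.mem_filter.mp hmem).1; simp at this; omega
        have := E2 hp0 M h5 h30; omega
      · simp only [hmem, if_false]
        have := E1 hp0 M; omega
    simpa using this
  · simp [Nat.factorization_eq_zero_of_not_prime _ hp0]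

/-- lcm-like dominating product -/
def L (M : ℕ) : ℕ := ∏ p ∈ primesBelow (30*M+1), p ^ (Nat.log p (30*M))

lemma L_pos (M : ℕ) : 0 < L M :=
  Finset.prod_pos fun q hq => pow_pos (Nat.mem_primesBelow.mp hq).2.pos _

lemma L_factorization (M : ℕ) (p0 : ℕ) (hp0 : p0.Prime) :
    (L M).factorization p0 = if p0 ∈ primesBelow (30*M+1) then Nat.log p0 (30*M) else 0 := by
  unfold L
  rw [Nat.factorization_prod (fun q hq => (pow_pos (Nat.mem_primesBelow.mp hq).2.pos _).ne')]
  rw [Finsupp.finset_sum_apply]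
  have hcong : ∀ q ∈ primesBelow (30*M+1), (q ^ (Nat.log q (30*M))).factorization p0
      = if q = p0 then Nat.log q (30*M) else 0 := fun q hq => by
    rw [(Nat.mem_primesBelow.mp hq).2.factorization_pow, Finsupp.single_apply]
  rw [Finset.sum_congr rfl hcong]
  rw [Finset.sum_ite_eq' (primesBelow (30*M+1)) p0 (fun q => Nat.log q (30*M))]

/-- divisibility: (30M)! * M! ∣ D M * L M -/
lemma Nbig_dvd (M : ℕ) : (30*M)! * M ! ∣ D M * L M := by
  rw [← Nat.factorization_le_iff_dvd (Nat.mul_pos (Nat.factorial_pos _) (Nat.factorial_pos _)).ne'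
      (Nat.mul_pos (D_pos M) (L_pos M)).ne']
  rw [Finsupp.le_def]
  intro p0
  by_cases hp0 : p0.Prime
  · rw [Nat.factorization_mul (D_pos M).ne' (L_pos M).ne']
    have hD := D_factorization hp0 M
    have hL := L_factorization M p0 hp0
    have hN := Nbig_factorization hp0 M
    simp only [Finsupp.coe_add, Pi.add_apply]
    rw [hD, hL, hN]
    by_cases hmem : p0 ∈ primesBelow (30*M+1)
    · simp only [hmem, if_true]
      exact E3 hp0 M
    · -- p0 > 30M : v's are all zero
      have hgt : 30*M < p0 := by
        by_contra hle
        exact hmem (Nat.mem_primesBelow.mpr ⟨by omega, hp0⟩)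
      have hv0 : ∀ k, k ≤ 30*M → v p0 k = 0 := fun k hk => by
        unfold v
        apply Nat.factorization_eq_zero_of_not_dvd
        rw [hp0.dvd_factorial]
        omega
      simp only [hmem, if_false]
      rw [hv0 _ (le_refl _), hv0 _ (by omega)]
      simp
  · simp [Nat.factorization_eq_zero_of_not_prime _ hp0]

/-- bound L by primorial and sqrt power -/
lemma L_le (M : ℕ) (hM : 1 ≤ M) :
    L M ≤ (30*M) ^ (Nat.sqrt (30*M)) * primorial (30*M) := by
  unfold L
  have hsplit := Finset.prod_filter_mul_prod_filter_not (primesBelow (30*M+1))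
    (fun p => p ≤ Nat.sqrt (30*M)) (fun p => p ^ (Nat.log p (30*M)))
  rw [← hsplit]
  have h1 : ∏ p ∈ (primesBelow (30*M+1)).filter (fun p => p ≤ Nat.sqrt (30*M)),
      p ^ (Nat.log p (30*M)) ≤ (30*M) ^ (Nat.sqrt (30*M)) := by
    calc ∏ p ∈ (primesBelow (30*M+1)).filter (fun p => p ≤ Nat.sqrt (30*M)),
          p ^ (Nat.log p (30*M))
        ≤ ∏ _p ∈ (primesBelow (30*M+1)).filter (fun p => p ≤ Nat.sqrt (30*M)), (30*M) := by
          apply Finset.prod_le_prod' -- might not exist; try prod_le_prod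
          intro q hq
          exact Nat.pow_log_le_self q (by omega)
      _ = (30*M) ^ ((primesBelow (30*M+1)).filter (fun p => p ≤ Nat.sqrt (30*M))).card := by
          rw [Finset.prod_const]
      _ ≤ (30*M) ^ (Nat.sqrt (30*M)) := by
          apply Nat.pow_le_pow_right (by omega)
          have : ((primesBelow (30*M+1)).filter (fun p => p ≤ Nat.sqrt (30*M))) ⊆
              Finset.Ico 2 (Nat.sqrt (30*M) + 1) := by
            intro q hq
            have h2 := Finset.mem_filter.mp hq
            have := (Nat.mem_primesBelow.mp h2.1).2.two_le
            rw [Finset.mem_Ico]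
            omega
          calc _ ≤ (Finset.Ico 2 (Nat.sqrt (30*M) + 1)).card := Finset.card_le_card this
            _ ≤ _ := by rw [Nat.card_Ico]; omega
  have h2 : ∏ p ∈ (primesBelow (30*M+1)).filter (fun p => ¬ p ≤ Nat.sqrt (30*M)),
      p ^ (Nat.log p (30*M)) ≤ primorial (30*M) := by
    have hlog1 : ∀ p ∈ (primesBelow (30*M+1)).filter (fun p => ¬ p ≤ Nat.sqrt (30*M)),
        p ^ (Nat.log p (30*M)) = p := by
      intro q hq
      have h2 := Finset.mem_filter.mp hq
      have hql := Nat.mem_primesBelow.mp h2.1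
      have hq2 : Nat.sqrt (30*M) < q := by omega
      have hlog : Nat.log q (30*M) = 1 := by
        apply Nat.log_eq_of_pow_le_of_lt_pow
        · rw [pow_one]; omega
        · calc 30*M < (Nat.sqrt (30*M) + 1)^2 := Nat.lt_succ_sqrt' (30*M)
            _ ≤ q^2 := Nat.pow_le_pow_left (by omega) 2
      rw [hlog, pow_one]
    rw [Finset.prod_congr rfl hlog1]
    unfold primorial
    apply Finset.prod_le_prod_of_subset_of_one_le'
    · intro q hq
      have h2 := Finset.mem_filter.mp hq
      have hql := Nat.mem_primesBelow.mp h2.1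
      rw [Finset.mem_filter, Finset.mem_range]
      exact ⟨hql.1, hql.2⟩
    · intro q hq _
      exact (Finset.mem_filter.mp hq).2.one_lt.le
  calc _ ≤ (30*M) ^ (Nat.sqrt (30*M)) * ∏ p ∈ (primesBelow (30*M+1)).filter (fun p => ¬ p ≤ Nat.sqrt (30*M)), p ^ (Nat.log p (30*M)) := Nat.mul_le_mul_right _ h1
    _ ≤ _ := Nat.mul_le_mul_left _ h2

/-- Main lower inequality (L'). -/
lemma L'ineq (M : ℕ) (hM : 1 ≤ M) :
    (30*M)! * M ! ≤ D M * ((30*M) ^ (Nat.sqrt (30*M)) * primorial (30*M)) := by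
  calc (30*M)! * M ! ≤ D M * L M := Nat.le_of_dvd (Nat.mul_pos (D_pos M) (L_pos M)) (Nbig_dvd M)
    _ ≤ _ := Nat.mul_le_mul_left _ (L_le M hM)

lemma log_ge_one_sub_inv {x : ℝ} (hx : 0 < x) : 1 - 1/x ≤ Real.log x := by
  have h := Real.log_le_sub_one_of_pos (show (0:ℝ) < 1/x by positivity)
  rw [Real.log_div one_ne_zero hx.ne', Real.log_one] at h
  linarith

lemma l2_bounds : 0.6931471 ≤ Real.log 2 ∧ Real.log 2 ≤ 0.6931472 :=
  ⟨by linarith [Real.log_two_gt_d9], by linarith [Real.log_two_lt_d9]⟩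

lemma l3_bounds : 1.0986 ≤ Real.log 3 ∧ Real.log 3 ≤ 1.09863 := by
  have h : (3:ℝ)^12 = 2^19 * (531441/524288) := by norm_num
  have hlog : 12 * Real.log 3 = 19 * Real.log 2 + Real.log (531441/524288) := by
    have := congrArg Real.log h
    rw [Real.log_pow, Real.log_mul (by positivity) (by norm_num), Real.log_pow] at this
    push_cast at this
    linarith
  have hup : Real.log (531441/524288) ≤ 7153/524288 := by
    have := Real.log_le_sub_one_of_pos (show (0:ℝ) < 531441/524288 by norm_num)
    linarith [this]
  have hlo : (7153/531441 : ℝ) ≤ Real.log (531441/524288) := by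
    have := log_ge_one_sub_inv (show (0:ℝ) < 531441/524288 by norm_num)
    have h2 : (1:ℝ) - 1/(531441/524288) = 7153/531441 := by norm_num
    linarith [h2 ▸ this]
  constructor
  · nlinarith [l2_bounds.1]
  · nlinarith [l2_bounds.2]

lemma l5_bounds : 1.6093 ≤ Real.log 5 ∧ Real.log 5 ≤ 1.60954 := by
  have h : (2:ℝ)^7 = 5^3 * (128/125) := by norm_num
  have hlog : 7 * Real.log 2 = 3 * Real.log 5 + Real.log (128/125) := by
    have := congrArg Real.log h
    rw [Real.log_pow, Real.log_mul (by positivity) (by norm_num), Real.log_pow] at this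
    push_cast at this
    linarith
  have hup : Real.log (128/125) ≤ 3/125 := by
    have := Real.log_le_sub_one_of_pos (show (0:ℝ) < 128/125 by norm_num)
    linarith
  have hlo : (3/128 : ℝ) ≤ Real.log (128/125) := by
    have := log_ge_one_sub_inv (show (0:ℝ) < 128/125 by norm_num)
    have h2 : (1:ℝ) - 1/(128/125) = 3/128 := by norm_num
    linarith [h2 ▸ this]
  constructor
  · nlinarith [l2_bounds.1]
  · nlinarith [l2_bounds.2]

/-- factorial log lower bound -/
lemma log_factorial_ge (n : ℕ) (hn : 1 ≤ n) : (n:ℝ)*Real.log n - n + 1 ≤ Real.log (n !) := by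
  induction n, hn using Nat.le_induction with
  | base => simp
  | succ n hn ih =>
    have hn0 : (0:ℝ) < n := by exact_mod_cast hn
    have hfact : Real.log ((n+1)! : ℕ) = Real.log ((n:ℝ)+1) + Real.log (n !) := by
      rw [Nat.factorial_succ]
      push_cast
      rw [Real.log_mul (by positivity) (by exact_mod_cast (Nat.factorial_pos n).ne')]
    rw [hfact]
    have ihh := ih
    -- key: n * log(1+1/n) ≤ 1, i.e. n*log(n+1) - n*log n ≤ 1
    have hkey : (n:ℝ) * Real.log ((n:ℝ)+1) - n * Real.log n ≤ 1 := by
      have hq : Real.log (((n:ℝ)+1)/n) ≤ ((n:ℝ)+1)/n - 1 :=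
        Real.log_le_sub_one_of_pos (by positivity)
      rw [Real.log_div (by positivity) hn0.ne'] at hq
      have h2 : ((n:ℝ)+1)/n - 1 = 1/n := by field_simp; ring
      rw [h2] at hq
      have h3 := mul_le_mul_of_nonneg_left hq hn0.le
      rw [mul_one_div, div_self hn0.ne'] at h3
      nlinarith [h3]
    push_cast
    nlinarith [hkey, ihh]

/-- factorial log upper bound -/
lemma log_factorial_le (n : ℕ) (hn : 1 ≤ n) : Real.log (n !) ≤ (n:ℝ)*Real.log n - n + 1 + Real.log n := by
  induction n, hn using Nat.le_induction with
  | base => simp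
  | succ n hn ih =>
    have hn0 : (0:ℝ) < n := by exact_mod_cast hn
    have hfact : Real.log ((n+1)! : ℕ) = Real.log ((n:ℝ)+1) + Real.log (n !) := by
      rw [Nat.factorial_succ]
      push_cast
      rw [Real.log_mul (by positivity) (by exact_mod_cast (Nat.factorial_pos n).ne')]
    rw [hfact]
    have ihh := ih
    -- key : 1 ≤ (n+1) * (log(n+1) - log n)
    have hkey : 1 ≤ ((n:ℝ)+1) * (Real.log ((n:ℝ)+1) - Real.log n) := by
      have hq : 1 - 1/(((n:ℝ)+1)/n) ≤ Real.log (((n:ℝ)+1)/n) := log_ge_one_sub_inv (by positivity)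
      rw [Real.log_div (by positivity) hn0.ne'] at hq
      have h2 : 1 - 1/(((n:ℝ)+1)/n) = 1/((n:ℝ)+1) := by
        field_simp
        ring
      rw [h2] at hq
      have := mul_le_mul_of_nonneg_left hq (show (0:ℝ) ≤ (n:ℝ)+1 by positivity)
      rw [mul_one_div, div_self (by positivity : ((n:ℝ)+1) ≠ 0)] at this
      linarith
    push_cast
    nlinarith [hkey, ihh]

noncomputable def kappa : ℝ := 14*Real.log 2 + 9*Real.log 3 + 5*Real.log 5

lemma log_cast_mul (c M : ℕ) (hc : 0 < c) (hM : 0 < M) :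
    Real.log ((c*M : ℕ) : ℝ) = Real.log c + Real.log M := by
  push_cast
  rw [Real.log_mul (by exact_mod_cast hc.ne') (by exact_mod_cast hM.ne')]

lemma kappa_eq : kappa = 30*Real.log 30 - 15*Real.log 15 - 10*Real.log 10 - 6*Real.log 6 := by
  have h30 : Real.log 30 = Real.log 2 + Real.log 3 + Real.log 5 := by
    rw [show (30:ℝ) = 2*3*5 by norm_num, Real.log_mul (by norm_num) (by norm_num),
        Real.log_mul (by norm_num) (by norm_num)]
  have h15 : Real.log 15 = Real.log 3 + Real.log 5 := by
    rw [show (15:ℝ) = 3*5 by norm_num, Real.log_mul (by norm_num) (by norm_num)]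
  have h10 : Real.log 10 = Real.log 2 + Real.log 5 := by
    rw [show (10:ℝ) = 2*5 by norm_num, Real.log_mul (by norm_num) (by norm_num)]
  have h6 : Real.log 6 = Real.log 2 + Real.log 3 := by
    rw [show (6:ℝ) = 2*3 by norm_num, Real.log_mul (by norm_num) (by norm_num)]
  unfold kappa
  rw [h30, h15, h10, h6]; ring

lemma QU (M : ℕ) (hM : 1 ≤ M) :
    Real.log ((30*M)! * M !) - Real.log (D M) ≤ kappa*M + 2*Real.log ((30*M : ℕ)) := by
  have hM0 : (0:ℝ) < M := by exact_mod_cast hM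
  have e30 := log_cast_mul 30 M (by norm_num) hM
  have e15 := log_cast_mul 15 M (by norm_num) hM
  have e10 := log_cast_mul 10 M (by norm_num) hM
  have e6 := log_cast_mul 6 M (by norm_num) hM
  have hN : Real.log ((30*M)! * M !) = Real.log ((30*M)!) + Real.log (M !) := by
    push_cast
    rw [Real.log_mul (by exact_mod_cast (Nat.factorial_pos _).ne') (by exact_mod_cast (Nat.factorial_pos _).ne')]
  have hD : Real.log (D M) = Real.log ((15*M)!) + Real.log ((10*M)!) + Real.log ((6*M)!) := by
    unfold D
    push_cast
    rw [Real.log_mul (by exact_mod_cast (Nat.factorial_pos _).ne') (by positivity),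
        Real.log_mul (by exact_mod_cast (Nat.factorial_pos _).ne') (by exact_mod_cast (Nat.factorial_pos _).ne')]
    ring
  have b30 := log_factorial_le (30*M) (by omega)
  have bM := log_factorial_le M hM
  have c15 := log_factorial_ge (15*M) (by omega)
  have c10 := log_factorial_ge (10*M) (by omega)
  have c6 := log_factorial_ge (6*M) (by omega)
  have hlogM : Real.log (M:ℝ) ≤ Real.log ((30*M :ℕ):ℝ) := by
    apply Real.log_le_log hM0
    push_cast; nlinarith
  rw [hN, hD, kappa_eq]
  rw [e30] at b30 ⊢
  rw [e15] at c15
  rw [e10] at c10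
  rw [e6] at c6
  push_cast at b30 bM c15 c10 c6 hlogM ⊢
  have h30nn : (0:ℝ) ≤ Real.log 30 := Real.log_nonneg (by norm_num)
  ring_nf at b30 bM c15 c10 c6 hlogM ⊢
  linarith [b30, bM, c15, c10, c6, hlogM, h30nn]

lemma QL (M : ℕ) (hM : 1 ≤ M) :
    kappa*M - 1 - 3*Real.log ((30*M : ℕ)) ≤ Real.log ((30*M)! * M !) - Real.log (D M) := by
  have hM0 : (0:ℝ) < M := by exact_mod_cast hM
  have e30 := log_cast_mul 30 M (by norm_num) hM
  have e15 := log_cast_mul 15 M (by norm_num) hM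
  have e10 := log_cast_mul 10 M (by norm_num) hM
  have e6 := log_cast_mul 6 M (by norm_num) hM
  have hN : Real.log ((30*M)! * M !) = Real.log ((30*M)!) + Real.log (M !) := by
    push_cast
    rw [Real.log_mul (by exact_mod_cast (Nat.factorial_pos _).ne') (by exact_mod_cast (Nat.factorial_pos _).ne')]
  have hD : Real.log (D M) = Real.log ((15*M)!) + Real.log ((10*M)!) + Real.log ((6*M)!) := by
    unfold D
    push_cast
    rw [Real.log_mul (by exact_mod_cast (Nat.factorial_pos _).ne') (by positivity),
        Real.log_mul (by exact_mod_cast (Nat.factorial_pos _).ne') (by exact_mod_cast (Nat.factorial_pos _).ne')]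
    ring
  have b30 := log_factorial_ge (30*M) (by omega)
  have bM := log_factorial_ge M hM
  have c15 := log_factorial_le (15*M) (by omega)
  have c10 := log_factorial_le (10*M) (by omega)
  have c6 := log_factorial_le (6*M) (by omega)
  have mono : ∀ c : ℕ, 0 < c → c ≤ 30 → Real.log (((c*M : ℕ)):ℝ) ≤ Real.log ((30*M :ℕ):ℝ) := by
    intro c hc h30
    apply Real.log_le_log (by push_cast; positivity)
    push_cast
    have : (c:ℝ) ≤ 30 := by exact_mod_cast h30
    nlinarith
  have m15 := mono 15 (by norm_num) (by norm_num)
  have m10 := mono 10 (by norm_num) (by norm_num)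
  have m6 := mono 6 (by norm_num) (by norm_num)
  rw [hN, hD, kappa_eq]
  rw [e30] at b30 m15 m10 m6 ⊢
  rw [e15] at c15 m15
  rw [e10] at c10 m10
  rw [e6] at c6 m6
  push_cast at b30 bM c15 c10 c6 m15 m10 m6 ⊢
  ring_nf at b30 bM c15 c10 c6 m15 m10 m6 ⊢
  linarith [b30, bM, c15, c10, c6, m15, m10, m6]

lemma kappa_le : kappa ≤ 27.64 := by
  unfold kappa; nlinarith [l2_bounds.2, l3_bounds.2, l5_bounds.2]
lemma kappa_ge : 27.637 ≤ kappa := by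
  unfold kappa; nlinarith [l2_bounds.1, l3_bounds.1, l5_bounds.1]

lemma primorial_mono {a b : ℕ} (h : a ≤ b) : primorial a ≤ primorial b := by
  unfold primorial
  apply Finset.prod_le_prod_of_subset_of_one_le'
  · apply Finset.filter_subset_filter
    exact Finset.range_subset_range.mpr (by omega)
  · intro q hq _
    exact (Finset.mem_filter.mp hq).2.one_lt.le

lemma PL_step (M : ℕ) (hM : 1 ≤ M) :
    Real.log (primorial (30*M)) ≤ Real.log (primorial (5*M)) + kappa*M + 2*Real.log ((30*M : ℕ)) := by
  have h := U' M
  have hlog : Real.log ((primorial (30*M) * D M : ℕ)) ≤ Real.log ((primorial (5*M) * ((30*M)! * M !) : ℕ)) := by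
    apply Real.log_le_log (by exact_mod_cast Nat.mul_pos (primorial_pos _) (D_pos M))
    exact_mod_cast h
  rw [Nat.cast_mul, Nat.cast_mul, Real.log_mul (by exact_mod_cast (primorial_pos _).ne') (by exact_mod_cast (D_pos M).ne'),
      Real.log_mul (by exact_mod_cast (primorial_pos _).ne')
        (by exact_mod_cast (Nat.mul_pos (Nat.factorial_pos _) (Nat.factorial_pos _)).ne')] at hlog
  have hq := QU M hM
  push_cast at hlog hq ⊢
  linarith

lemma log_primorial_le (n : ℕ) : Real.log (primorial n) ≤ 2*n*Real.log 2 := by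
  have h := primorial_le_4_pow n
  have : Real.log (primorial n) ≤ Real.log ((4^n : ℕ)) :=
    Real.log_le_log (by exact_mod_cast primorial_pos n) (by exact_mod_cast h)
  calc Real.log (primorial n) ≤ Real.log ((4^n : ℕ)) := this
    _ = n * Real.log 4 := by push_cast; rw [Real.log_pow]
    _ = 2*n*Real.log 2 := by
        rw [show (4:ℝ) = 2^2 by norm_num, Real.log_pow]; push_cast; ring

set_option maxHeartbeats 1000000 in
/-- Chebyshev-type primorial upper bound -/
lemma PL_bound : ∀ M : ℕ, Real.log (primorial (30*M)) ≤ 33.168*M + 8*(Real.log (M+1) + 2)^2 := by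
  intro M
  induction M using Nat.strong_induction_on with
  | _ M ih =>
  rcases le_or_gt M 7 with hM7 | hM8
  · -- base cases : use 4^n bound
    have h := log_primorial_le (30*M)
    have hl2 := l2_bounds
    have hsq : (0:ℝ) ≤ (Real.log (M+1) + 2)^2 := sq_nonneg _
    rcases Nat.lt_or_ge M 2 with hM1 | hM2
    · interval_cases M
      · have h0 : primorial 0 = 1 := rfl
        rw [h0]
        simp
      · have hx : (2.6931471:ℝ) ≤ Real.log (1+1) + 2 := by
          norm_num
          linarith [l2_bounds.1]
        have h2 : (2.6931471:ℝ)^2 ≤ (Real.log ((1:ℕ)+1) + 2)^2 := by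
          push_cast
          nlinarith [hx]
        push_cast at h ⊢
        nlinarith [l2_bounds.2, h2]
    · -- 2 ≤ M ≤ 7 : log(M+1) ≥ log 3
      have hlog3 : Real.log 3 ≤ Real.log ((M:ℝ)+1) := by
        apply Real.log_le_log (by norm_num)
        have : (2:ℝ) ≤ M := by exact_mod_cast hM2
        linarith
      have hx : (3.0986:ℝ) ≤ Real.log ((M:ℝ)+1) + 2 := by linarith [l3_bounds.1]
      have h2 : (3.0986:ℝ)^2 ≤ (Real.log ((M:ℝ)+1) + 2)^2 := by nlinarith [hx]
      have hM7' : (M:ℝ) ≤ 7 := by exact_mod_cast hM7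
      have hM2' : (2:ℝ) ≤ M := by exact_mod_cast hM2
      push_cast at h ⊢
      nlinarith [l2_bounds.2, h2]
  · -- step : M ≥ 8
    set M' := (M+5)/6 with hM'
    have hM'lt : M' < M := by omega
    have ihM' := ih M' hM'lt
    have h5M : 5*M ≤ 30*M' := by omega
    have hmono : Real.log (primorial (5*M)) ≤ Real.log (primorial (30*M')) := by
      apply Real.log_le_log (by exact_mod_cast primorial_pos _)
      exact_mod_cast primorial_mono h5M
    have hstep := PL_step M (by omega)
    -- log (30M) ≤ log 30 + log (M+1)
    have hlog30M : Real.log ((30*M : ℕ):ℝ) ≤ Real.log 30 + Real.log ((M:ℝ)+1) := by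
      have : ((30*M : ℕ):ℝ) ≤ 30*((M:ℝ)+1) := by
        push_cast
        have h0 : (0:ℝ) ≤ (M:ℝ) := Nat.cast_nonneg M
        linarith
      calc Real.log ((30*M : ℕ):ℝ) ≤ Real.log (30*((M:ℝ)+1)) := by
            apply Real.log_le_log (by push_cast; positivity) this
        _ = Real.log 30 + Real.log ((M:ℝ)+1) := by
            rw [Real.log_mul (by norm_num) (by positivity)]
    have hlog30 : Real.log 30 ≤ 3.402 := by
      rw [show (30:ℝ) = 2*3*5 by norm_num, Real.log_mul (by norm_num) (by norm_num),
          Real.log_mul (by norm_num) (by norm_num)]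
      linarith [l2_bounds.2, l3_bounds.2, l5_bounds.2]
    -- log (M'+1) ≤ log (M+1) - 1
    have hdrop : Real.log ((M':ℝ)+1) ≤ Real.log ((M:ℝ)+1) - 1 := by
      have hM'r : ((M':ℝ)+1) * 2.7182818286 ≤ (M:ℝ)+1 := by
        have h6 : (M':ℝ) ≤ ((M:ℝ)+5)/6 := by
          have := Nat.div_le_div_right (c := 6) (le_refl (M+5))
          have h2 : (M':ℝ) * 6 ≤ (M:ℝ) + 5 := by
            exact_mod_cast Nat.div_mul_le_self (M+5) 6
          linarith
        have hM8' : (8:ℝ) ≤ M := by exact_mod_cast hM8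
        nlinarith
      have hpos : (0:ℝ) < (M':ℝ)+1 := by positivity
      have he : Real.exp 1 ≤ ((M:ℝ)+1)/((M':ℝ)+1) := by
        rw [le_div_iff₀ hpos]
        calc Real.exp 1 * ((M':ℝ)+1) ≤ 2.7182818286 * ((M':ℝ)+1) := by
              nlinarith [Real.exp_one_lt_d9, hpos]
          _ ≤ (M:ℝ)+1 := by linarith
      have h1 : 1 ≤ Real.log (((M:ℝ)+1)/((M':ℝ)+1)) :=
        (Real.le_log_iff_exp_le (by positivity)).mpr he
      rw [Real.log_div (by positivity) hpos.ne'] at h1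
      linarith
    -- assemble
    have hkap := kappa_le
    have hM'le : (M':ℝ) ≤ ((M:ℝ)+5)/6 := by
      have h2 : (M':ℝ) * 6 ≤ (M:ℝ) + 5 := by
        exact_mod_cast Nat.div_mul_le_self (M+5) 6
      linarith
    have hM8' : (8:ℝ) ≤ M := by exact_mod_cast hM8
    have hlogM1 : (2.19:ℝ) ≤ Real.log ((M:ℝ)+1) := by
      calc (2.19:ℝ) ≤ 2*1.0986 := by norm_num
        _ ≤ 2*Real.log 3 := by linarith [l3_bounds.1]
        _ = Real.log 9 := by
            rw [show (9:ℝ) = 3*3 by norm_num, Real.log_mul (by norm_num) (by norm_num)]; ring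
        _ ≤ Real.log ((M:ℝ)+1) := by
            apply Real.log_le_log (by norm_num)
            linarith
    have hkapM : kappa * M ≤ 27.64 * M := by
      have : (0:ℝ) ≤ M := by positivity
      nlinarith [hkap]
    -- final : need 33.168*M' + 8*(log(M'+1)+2)^2 + 27.64*M + 2*(log30 + log(M+1)) ≤ 33.168*M + 8*(log(M+1)+2)^2
    have hsq : 8*(Real.log ((M':ℝ)+1)+2)^2 ≤ 8*(Real.log ((M:ℝ)+1)+1)^2 := by
      have hnn : (0:ℝ) ≤ Real.log ((M':ℝ)+1) + 2 := by
        have h0 : (0:ℝ) ≤ (M':ℝ) := Nat.cast_nonneg M'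
        have : (0:ℝ) ≤ Real.log ((M':ℝ)+1) := Real.log_nonneg (by linarith)
        linarith
      nlinarith [hdrop, hnn]
    have hexp : 8*(Real.log ((M:ℝ)+1)+2)^2 - 8*(Real.log ((M:ℝ)+1)+1)^2
        = 16*Real.log ((M:ℝ)+1) + 24 := by ring
    push_cast at ihM' hstep hmono hlog30M ⊢
    linarith [ihM', hstep, hmono, hlog30M, hlog30, hsq, hlogM1, hkapM, hM'le, hexp]

/-- certification: K ≤ Y0^(j/16) from K^16 ≤ Y0^j -/
lemma cert16 (Y0 K : ℝ) (j : ℕ) (hY0 : 0 ≤ Y0) (hK : 0 ≤ K) (h : K^(16:ℕ) ≤ Y0^j) :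
    K ≤ Y0^((j:ℝ)/16) := by
  have h2 : (Y0^((j:ℝ)/16))^(16:ℕ) = Y0^j := by
    rw [← Real.rpow_natCast (Y0^((j:ℝ)/16)) 16, ← Real.rpow_mul hY0]
    rw [show ((j:ℝ)/16) * (16:ℕ) = (j:ℝ) by push_cast; ring]
    rw [Real.rpow_natCast]
  apply le_of_pow_le_pow_left₀ (n := 16) (by norm_num) (Real.rpow_nonneg hY0 _)
  rw [h2]; exact h

lemma rpow_split (y K : ℝ) (a b : ℝ) (ha : 0 ≤ a) (hab : a + b = 1) (hy : 0 < y)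
    (hK0 : 0 ≤ K) (hK : K ≤ y^b) : K * y^a ≤ y := by
  have h1 : y^a * y^b = y := by
    rw [← Real.rpow_add hy, hab, Real.rpow_one]
  calc K * y^a ≤ y^b * y^a := by
        apply mul_le_mul_of_nonneg_right hK (Real.rpow_nonneg hy.le a)
    _ = y := by rw [mul_comm]; exact h1

lemma log_le_16 {y : ℝ} (hy : 1 ≤ y) : Real.log y ≤ 16*(y^((1:ℝ)/16) - 1) := by
  have hy0 : (0:ℝ) < y := by linarith
  have h1 : Real.log (y^((1:ℝ)/16)) = (1/16) * Real.log y := Real.log_rpow hy0 _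
  have h2 : Real.log (y^((1:ℝ)/16)) ≤ y^((1:ℝ)/16) - 1 :=
    Real.log_le_sub_one_of_pos (Real.rpow_pos_of_pos hy0 _)
  rw [h1] at h2
  linarith

lemma key916 {y : ℝ} (hy : 2500000 ≤ y) : 16 * y^((9:ℝ)/16) ≤ y * (2/75) := by
  have hy0 : (0:ℝ) < y := by linarith
  have hcert : (600:ℝ) ≤ (2500000:ℝ)^((7:ℝ)/16) := by
    apply cert16 _ _ _ (by norm_num) (by norm_num)
    norm_num
  have h600 : (600:ℝ) ≤ y^((7:ℝ)/16) := by
    calc (600:ℝ) ≤ (2500000:ℝ)^((7:ℝ)/16) := hcert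
      _ ≤ y^((7:ℝ)/16) := Real.rpow_le_rpow (by norm_num) hy (by norm_num)
  have := rpow_split y 600 ((9:ℝ)/16) ((7:ℝ)/16) (by norm_num) (by norm_num) hy0 (by norm_num) h600
  linarith

lemma key116 {y : ℝ} (hy : 2500000 ≤ y) : y^((1:ℝ)/16) ≤ y/500000 := by
  have hy0 : (0:ℝ) < y := by linarith
  have hcert : (500000:ℝ) ≤ (2500000:ℝ)^((15:ℝ)/16) := by
    apply cert16 _ _ _ (by norm_num) (by norm_num)
    norm_num
  have h5 : (500000:ℝ) ≤ y^((15:ℝ)/16) := by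
    calc (500000:ℝ) ≤ (2500000:ℝ)^((15:ℝ)/16) := hcert
      _ ≤ y^((15:ℝ)/16) := Real.rpow_le_rpow (by norm_num) hy (by norm_num)
  have := rpow_split y 500000 ((1:ℝ)/16) ((15:ℝ)/16) (by norm_num) (by norm_num) hy0 (by norm_num) h5
  linarith

lemma key18 {z : ℝ} (hz : 80000 ≤ z) : z^((1:ℝ)/8) ≤ z/15000 := by
  have hz0 : (0:ℝ) < z := by linarith
  have hcert : (15000:ℝ) ≤ (80000:ℝ)^((14:ℝ)/16) := by
    apply cert16 _ _ _ (by norm_num) (by norm_num)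
    norm_num
  have h5 : (15000:ℝ) ≤ z^((7:ℝ)/8) := by
    calc (15000:ℝ) ≤ (80000:ℝ)^((14:ℝ)/16) := hcert
      _ = (80000:ℝ)^((7:ℝ)/8) := by norm_num
      _ ≤ z^((7:ℝ)/8) := Real.rpow_le_rpow (by norm_num) hz (by norm_num)
  have := rpow_split z 15000 ((1:ℝ)/8) ((7:ℝ)/8) (by norm_num) (by norm_num) hz0 (by norm_num) h5
  linarith

lemma primorial_eq_of_no_prime {a b : ℕ} (hab : a ≤ b)
    (h : ∀ p, p.Prime → a < p → p ≤ b → False) : primorial b = primorial a := by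
  have h2 := primorial_add a (b - a)
  rw [show a + (b-a) = b by omega] at h2
  rw [h2]
  have hempty : ((Finset.Ico (a+1) (b + 1)).filter Nat.Prime) = ∅ := by
    apply Finset.filter_eq_empty_iff.mpr
    intro p hp hpp
    rw [Finset.mem_Ico] at hp
    exact h p hpp (by omega) (by omega)
  rw [hempty]
  simp

set_option maxHeartbeats 1000000 in
lemma nagura_large (m : ℕ) (hm : 2000000 ≤ m) :
    ∃ p, p.Prime ∧ m < p ∧ 10*p ≤ 13*m := by
  by_contra hcon
  push_neg at hcon
  -- no prime in (m, 13m/10]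
  set q13 := 13*m/10 with hq13
  have hq13m : m ≤ q13 := by omega
  have hpreq : primorial q13 = primorial m := by
    apply primorial_eq_of_no_prime hq13m
    intro p hpp h1 h2
    have := hcon p hpp h1
    omega
  set M := q13/30 with hM
  set M2 := (m+29)/30 with hM2
  set s := Nat.sqrt (30*M) with hs
  -- ℕ facts
  have hMge : 86666 ≤ M := by omega
  have h30M : 30*M ≤ q13 := by omega
  have h30Mge : 300*M + 299 ≥ 13*m := by omega
  have h30Mle : 10*(30*M) ≤ 13*m := by omega
  have hm2 : m ≤ 30*M2 := by omega
  have hm2' : 30*M2 ≤ m + 29 := by omega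
  have hz : 25*(M2+1) ≤ m := by omega
  -- real versions
  have hy0 : (0:ℝ) < 30*(M:ℝ) := by positivity
  have hyge : 2500000 ≤ 30*(M:ℝ) := by
    have : (13:ℝ)*m ≤ 300*M + 299 := by exact_mod_cast h30Mge
    have hmr : (2000000:ℝ) ≤ m := by exact_mod_cast hm
    linarith
  have hyle : 10*(30*(M:ℝ)) ≤ 13*(m:ℝ) := by exact_mod_cast h30Mle
  -- step 1 : lower bound on log primorial(30M)
  have hlow : kappa*M - 1 - 3*Real.log (30*(M:ℝ)) ≤
      (s:ℝ)*Real.log (30*(M:ℝ)) + Real.log (primorial (30*M)) := by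
    have h1 := L'ineq M (by omega)
    have hlog : Real.log (((30*M)! * M ! : ℕ)) ≤
        Real.log ((D M * ((30*M) ^ s * primorial (30*M)) : ℕ)) := by
      apply Real.log_le_log (by exact_mod_cast Nat.mul_pos (Nat.factorial_pos _) (Nat.factorial_pos _))
      exact_mod_cast h1
    have hMr0 : (0:ℝ) < (M:ℝ) := by
      have : (0:ℕ) < M := by omega
      exact_mod_cast this
    have hprp : (0:ℝ) < ((primorial (30*M) : ℕ) : ℝ) := by exact_mod_cast primorial_pos (30*M)
    have hDp : (0:ℝ) < ((D M : ℕ) : ℝ) := by exact_mod_cast D_pos M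
    have hf1 : (0:ℝ) < (((30*M)! : ℕ) : ℝ) := by exact_mod_cast Nat.factorial_pos (30*M)
    have hf2 : (0:ℝ) < ((M ! : ℕ) : ℝ) := by exact_mod_cast Nat.factorial_pos M
    push_cast at hlog
    rw [Real.log_mul hf1.ne' hf2.ne',
        Real.log_mul hDp.ne' (by positivity),
        Real.log_mul (by positivity) hprp.ne',
        Real.log_pow] at hlog
    have h2 := QL M (by omega)
    push_cast at h2 ⊢
    rw [Real.log_mul hf1.ne' hf2.ne'] at h2
    linarith
  -- step 2 : upper bound via primorial chain
  have hup : Real.log (primorial (30*M)) ≤ 33.168*M2 + 8*(Real.log ((M2:ℝ)+1) + 2)^2 := by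
    have c1 : Real.log (primorial (30*M)) ≤ Real.log (primorial q13) :=
      Real.log_le_log (by exact_mod_cast primorial_pos _) (by exact_mod_cast primorial_mono h30M)
    have c2 : Real.log (primorial q13) = Real.log (primorial m) := by rw [hpreq]
    have c3 : Real.log (primorial m) ≤ Real.log (primorial (30*M2)) :=
      Real.log_le_log (by exact_mod_cast primorial_pos _) (by exact_mod_cast primorial_mono hm2)
    have c4 := PL_bound M2
    push_cast at c4
    linarith
  -- step 3 : numeric bounds
  have hsL : (s:ℝ) ≤ Real.sqrt (30*(M:ℝ)) := by
    have h1 : ((s:ℝ))^2 ≤ 30*(M:ℝ) := by exact_mod_cast Nat.sqrt_le' (30*M)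
    calc (s:ℝ) = Real.sqrt ((s:ℝ)^2) := (Real.sqrt_sq (Nat.cast_nonneg s)).symm
      _ ≤ Real.sqrt (30*(M:ℝ)) := Real.sqrt_le_sqrt h1
  have hLle : Real.log (30*(M:ℝ)) ≤ 16*((30*(M:ℝ))^((1:ℝ)/16) - 1) := log_le_16 (by linarith)
  have hLnn : 0 ≤ Real.log (30*(M:ℝ)) := Real.log_nonneg (by linarith)
  have hsrt : Real.sqrt (30*(M:ℝ)) = (30*(M:ℝ))^((1:ℝ)/2) := Real.sqrt_eq_rpow _
  have hcomb : (s:ℝ)*Real.log (30*(M:ℝ)) ≤ 16*(30*(M:ℝ))^((9:ℝ)/16) := by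
    have h1 : (s:ℝ)*Real.log (30*(M:ℝ)) ≤
        Real.sqrt (30*(M:ℝ)) * (16*((30*(M:ℝ))^((1:ℝ)/16) - 1)) :=
      mul_le_mul hsL hLle hLnn (Real.sqrt_nonneg _)
    have h2 : Real.sqrt (30*(M:ℝ)) * (16*((30*(M:ℝ))^((1:ℝ)/16) - 1)) ≤
        16 * ((30*(M:ℝ))^((1:ℝ)/2) * (30*(M:ℝ))^((1:ℝ)/16)) := by
      rw [hsrt]
      have hp : (0:ℝ) ≤ (30*(M:ℝ))^((1:ℝ)/2) := Real.rpow_nonneg hy0.le _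
      nlinarith [hp]
    have h3 : (30*(M:ℝ))^((1:ℝ)/2) * (30*(M:ℝ))^((1:ℝ)/16) = (30*(M:ℝ))^((9:ℝ)/16) := by
      rw [← Real.rpow_add hy0]; norm_num
    rw [h3] at h2
    linarith
  have hLsmall : 3*Real.log (30*(M:ℝ)) ≤ 48*((30*(M:ℝ))/500000) := by
    have := key116 hyge
    nlinarith [hLle, this, Real.rpow_nonneg hy0.le ((1:ℝ)/16)]
  -- log(M2+1) bound
  have hzge : 80000 ≤ (m:ℝ)/25 := by
    have : (2000000:ℝ) ≤ m := by exact_mod_cast hm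
    linarith
  have hM2z : ((M2:ℝ)+1) ≤ (m:ℝ)/25 := by
    have : ((25*(M2+1) : ℕ) : ℝ) ≤ m := by exact_mod_cast hz
    push_cast at this
    linarith
  have hlogM2 : Real.log ((M2:ℝ)+1) ≤ 16*(((m:ℝ)/25)^((1:ℝ)/16) - 1) := by
    calc Real.log ((M2:ℝ)+1) ≤ Real.log ((m:ℝ)/25) := by
          apply Real.log_le_log (by positivity) hM2z
      _ ≤ _ := log_le_16 (by linarith)
  have hsq : 8*(Real.log ((M2:ℝ)+1) + 2)^2 ≤ 2048 * ((m:ℝ)/25)^((1:ℝ)/8) := by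
    have hu1 : 1 ≤ ((m:ℝ)/25)^((1:ℝ)/16) := Real.one_le_rpow (by linarith) (by norm_num)
    have hu2 : (((m:ℝ)/25)^((1:ℝ)/16))^2 = ((m:ℝ)/25)^((1:ℝ)/8) := by
      rw [← Real.rpow_natCast (((m:ℝ)/25)^((1:ℝ)/16)) 2, ← Real.rpow_mul (by linarith)]
      norm_num
    have hlog2 : 0 ≤ Real.log ((M2:ℝ)+1) + 2 := by
      have h0 : (0:ℝ) ≤ (M2:ℝ) := Nat.cast_nonneg M2
      have : 0 ≤ Real.log ((M2:ℝ)+1) := Real.log_nonneg (by linarith)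
      linarith
    have hbound : Real.log ((M2:ℝ)+1) + 2 ≤ 16*(((m:ℝ)/25)^((1:ℝ)/16)) - 14 := by
      linarith [hlogM2]
    have h1 : (Real.log ((M2:ℝ)+1) + 2)^2 ≤ (16*(((m:ℝ)/25)^((1:ℝ)/16)) - 14)^2 := by
      nlinarith [hbound, hlog2]
    have h2 : (16*(((m:ℝ)/25)^((1:ℝ)/16)) - 14)^2 ≤ 256*(((m:ℝ)/25)^((1:ℝ)/16))^2 := by
      nlinarith [hu1]
    rw [hu2] at h2
    linarith
  -- final contradiction
  have hkM : 27.637*(M:ℝ) ≤ kappa*M := by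
    have h0 : (0:ℝ) ≤ (M:ℝ) := Nat.cast_nonneg M
    nlinarith [kappa_ge]
  have hMr : 13*(m:ℝ) ≤ 10*(30*(M:ℝ)) + 299 := by
    have : (13:ℝ)*m ≤ 300*M + 299 := by exact_mod_cast h30Mge
    linarith
  have hM2r : 30*(M2:ℝ) ≤ (m:ℝ) + 29 := by exact_mod_cast hm2'
  have hk916 := key916 hyge
  have hk18 := key18 hzge
  have hmr : (2000000:ℝ) ≤ m := by exact_mod_cast hm
  linarith [hlow, hup, hcomb, hLsmall, hsq, hkM, hMr, hM2r, hk916, hk18, hLnn]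

lemma nagura_small (m : ℕ) (h14 : 14 ≤ m) (hlt : m < 2000000) :
    ∃ p, p.Prime ∧ m < p ∧ 10*p ≤ 13*m := by
  rcases Nat.lt_or_ge m 17 with h0|h0
  · exact ⟨17, by norm_num, by omega, by omega⟩
  rcases Nat.lt_or_ge m 19 with h1|h1
  · exact ⟨19, by norm_num, by omega, by omega⟩
  rcases Nat.lt_or_ge m 23 with h2|h2
  · exact ⟨23, by norm_num, by omega, by omega⟩
  rcases Nat.lt_or_ge m 29 with h3|h3
  · exact ⟨29, by norm_num, by omega, by omega⟩
  rcases Nat.lt_or_ge m 37 with h4|h4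
  · exact ⟨37, by norm_num, by omega, by omega⟩
  rcases Nat.lt_or_ge m 47 with h5|h5
  · exact ⟨47, by norm_num, by omega, by omega⟩
  rcases Nat.lt_or_ge m 61 with h6|h6
  · exact ⟨61, by norm_num, by omega, by omega⟩
  rcases Nat.lt_or_ge m 79 with h7|h7
  · exact ⟨79, by norm_num, by omega, by omega⟩
  rcases Nat.lt_or_ge m 101 with h8|h8
  · exact ⟨101, by norm_num, by omega, by omega⟩
  rcases Nat.lt_or_ge m 131 with h9|h9
  · exact ⟨131, by norm_num, by omega, by omega⟩
  rcases Nat.lt_or_ge m 167 with h10|h10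
  · exact ⟨167, by norm_num, by omega, by omega⟩
  rcases Nat.lt_or_ge m 211 with h11|h11
  · exact ⟨211, by norm_num, by omega, by omega⟩
  rcases Nat.lt_or_ge m 271 with h12|h12
  · exact ⟨271, by norm_num, by omega, by omega⟩
  rcases Nat.lt_or_ge m 349 with h13|h13
  · exact ⟨349, by norm_num, by omega, by omega⟩
  rcases Nat.lt_or_ge m 449 with h14|h14
  · exact ⟨449, by norm_num, by omega, by omega⟩
  rcases Nat.lt_or_ge m 577 with h15|h15
  · exact ⟨577, by norm_num, by omega, by omega⟩
  rcases Nat.lt_or_ge m 743 with h16|h16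
  · exact ⟨743, by norm_num, by omega, by omega⟩
  rcases Nat.lt_or_ge m 953 with h17|h17
  · exact ⟨953, by norm_num, by omega, by omega⟩
  rcases Nat.lt_or_ge m 1237 with h18|h18
  · exact ⟨1237, by norm_num, by omega, by omega⟩
  rcases Nat.lt_or_ge m 1607 with h19|h19
  · exact ⟨1607, by norm_num, by omega, by omega⟩
  rcases Nat.lt_or_ge m 2089 with h20|h20
  · exact ⟨2089, by norm_num, by omega, by omega⟩
  rcases Nat.lt_or_ge m 2713 with h21|h21
  · exact ⟨2713, by norm_num, by omega, by omega⟩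
  rcases Nat.lt_or_ge m 3517 with h22|h22
  · exact ⟨3517, by norm_num, by omega, by omega⟩
  rcases Nat.lt_or_ge m 4567 with h23|h23
  · exact ⟨4567, by norm_num, by omega, by omega⟩
  rcases Nat.lt_or_ge m 5927 with h24|h24
  · exact ⟨5927, by norm_num, by omega, by omega⟩
  rcases Nat.lt_or_ge m 7703 with h25|h25
  · exact ⟨7703, by norm_num, by omega, by omega⟩
  rcases Nat.lt_or_ge m 10009 with h26|h26
  · exact ⟨10009, by norm_num, by omega, by omega⟩
  rcases Nat.lt_or_ge m 13009 with h27|h27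
  · exact ⟨13009, by norm_num, by omega, by omega⟩
  rcases Nat.lt_or_ge m 16903 with h28|h28
  · exact ⟨16903, by norm_num, by omega, by omega⟩
  rcases Nat.lt_or_ge m 21961 with h29|h29
  · exact ⟨21961, by norm_num, by omega, by omega⟩
  rcases Nat.lt_or_ge m 28549 with h30|h30
  · exact ⟨28549, by norm_num, by omega, by omega⟩
  rcases Nat.lt_or_ge m 37097 with h31|h31
  · exact ⟨37097, by norm_num, by omega, by omega⟩
  rcases Nat.lt_or_ge m 48221 with h32|h32
  · exact ⟨48221, by norm_num, by omega, by omega⟩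
  rcases Nat.lt_or_ge m 62687 with h33|h33
  · exact ⟨62687, by norm_num, by omega, by omega⟩
  rcases Nat.lt_or_ge m 81463 with h34|h34
  · exact ⟨81463, by norm_num, by omega, by omega⟩
  rcases Nat.lt_or_ge m 105899 with h35|h35
  · exact ⟨105899, by norm_num, by omega, by omega⟩
  rcases Nat.lt_or_ge m 137659 with h36|h36
  · exact ⟨137659, by norm_num, by omega, by omega⟩
  rcases Nat.lt_or_ge m 178951 with h37|h37
  · exact ⟨178951, by norm_num, by omega, by omega⟩
  rcases Nat.lt_or_ge m 232633 with h38|h38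
  · exact ⟨232633, by norm_num, by omega, by omega⟩
  rcases Nat.lt_or_ge m 302417 with h39|h39
  · exact ⟨302417, by norm_num, by omega, by omega⟩
  rcases Nat.lt_or_ge m 393137 with h40|h40
  · exact ⟨393137, by norm_num, by omega, by omega⟩
  rcases Nat.lt_or_ge m 511061 with h41|h41
  · exact ⟨511061, by norm_num, by omega, by omega⟩
  rcases Nat.lt_or_ge m 664379 with h42|h42
  · exact ⟨664379, by norm_num, by omega, by omega⟩
  rcases Nat.lt_or_ge m 863689 with h43|h43
  · exact ⟨863689, by norm_num, by omega, by omega⟩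
  rcases Nat.lt_or_ge m 1122761 with h44|h44
  · exact ⟨1122761, by norm_num, by omega, by omega⟩
  rcases Nat.lt_or_ge m 1459589 with h45|h45
  · exact ⟨1459589, by norm_num, by omega, by omega⟩
  rcases Nat.lt_or_ge m 1897459 with h46|h46
  · exact ⟨1897459, by norm_num, by omega, by omega⟩
  rcases Nat.lt_or_ge m 2466691 with h47|h47
  · exact ⟨2466691, by norm_num, by omega, by omega⟩
  omega

lemma nagura (m : ℕ) (h14 : 14 ≤ m) : ∃ p, p.Prime ∧ m < p ∧ 10*p ≤ 13*m := by
  rcases Nat.lt_or_ge m 2000000 with h|h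
  · exact nagura_small m h14 h
  · exact nagura_large m h

lemma lt_div_add_one_mul_self (n : ℕ) {b : ℕ} (hb : 0 < b) : n < (n/b + 1) * b := by
  have e := Nat.div_add_mod n b
  have hm := Nat.mod_lt n hb
  calc n = b*(n/b) + n%b := e.symm
    _ < b*(n/b) + b := Nat.add_lt_add_left hm _
    _ = (n/b+1)*b := by ring

end NaguraAux

theorem exists_prime_pair_mul_between (a : ℕ) (ha : 0 < a) (n : ℕ) (hn : 0 < n)
    (h : 5 * n > 72 * a) :
    ∃ p q : ℕ, p.Prime ∧ q.Prime ∧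
      2 * n < 2 * (a * p) ∧ 2 * (a * p) < 3 * n ∧
      3 * n < 2 * (a * q) ∧ 2 * (a * q) < 4 * n := by
  -- first prime : p ∈ (n/a, 13(n/a)/10]
  have hk1 : 14 ≤ n / a := by
    rw [Nat.le_div_iff_mul_le ha]
    omega
  obtain ⟨p, hp, hp1, hp2⟩ := NaguraAux.nagura (n / a) hk1
  -- second prime : q ∈ (3n/(2a), ...]
  have h2a : 0 < 2*a := by omega
  have hk2 : 14 ≤ 3*n / (2*a) := by
    rw [Nat.le_div_iff_mul_le h2a]
    omega
  obtain ⟨q, hq, hq1, hq2⟩ := NaguraAux.nagura (3*n / (2*a)) hk2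
  refine ⟨p, q, hp, hq, ?_, ?_, ?_, ?_⟩
  · -- 2n < 2ap
    have h1 : n < (n/a + 1) * a := NaguraAux.lt_div_add_one_mul_self n ha
    have h2 : (n/a + 1) * a ≤ p * a := Nat.mul_le_mul_right a (by omega)
    have : n < a * p := by
      calc n < (n/a + 1) * a := h1
        _ ≤ p * a := h2
        _ = a * p := by ring
    omega
  · -- 2ap < 3n
    have h1 : (n/a) * a ≤ n := Nat.div_mul_le_self n a
    have h2 : 10 * (a*p) ≤ 13 * n := by
      calc 10 * (a*p) = a * (10*p) := by ring
        _ ≤ a * (13 * (n/a)) := Nat.mul_le_mul_left a hp2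
        _ = 13 * ((n/a) * a) := by ring
        _ ≤ 13 * n := Nat.mul_le_mul_left 13 h1
    omega
  · -- 3n < 2aq
    have h1 : 3*n < (3*n/(2*a) + 1) * (2*a) := NaguraAux.lt_div_add_one_mul_self (3*n) h2a
    have h2 : (3*n/(2*a) + 1) * (2*a) ≤ q * (2*a) := Nat.mul_le_mul_right (2*a) (by omega)
    have : 3*n < 2*(a*q) := by
      calc 3*n < (3*n/(2*a) + 1) * (2*a) := h1
        _ ≤ q * (2*a) := h2
        _ = 2*(a*q) := by ring
    omega
  · -- 2aq < 4n
    have h1 : (3*n/(2*a)) * (2*a) ≤ 3*n := Nat.div_mul_le_self (3*n) (2*a)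
    have h2 : 10 * (2*(a*q)) ≤ 39 * n := by
      calc 10 * (2*(a*q)) = (10*q) * (2*a) := by ring
        _ ≤ (13 * (3*n/(2*a))) * (2*a) := Nat.mul_le_mul_right (2*a) hq2
        _ = 13 * ((3*n/(2*a)) * (2*a)) := by ring
        _ ≤ 13 * (3*n) := Nat.mul_le_mul_left 13 h1
        _ = 39 * n := by ring
    omega
end

section
/- If a is an integer greater than 1, then for every positive integer n with n > 14.4a (equivalently 5n > 72a) there exist at least four prime numbers p, q, r, and s such that n < a·p < 3n/2 < a·q < 2n and simultaneously n < r < 3n/2 < s < 2n. -/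
open ArithmeticFunction Finset

noncomputable def psi (x : ℕ) : ℝ := ∑ q ∈ Finset.Ioc 0 x, Λ q

lemma psi_zero : psi 0 = 0 := by simp [psi]

lemma psi_succ (m : ℕ) : psi (m + 1) = psi m + Λ (m + 1) := by
  rw [psi, psi, ← Finset.sum_Ioc_succ_top (Nat.zero_le _)]

lemma psi_nonneg (x : ℕ) : 0 ≤ psi x :=
  Finset.sum_nonneg fun _ _ => vonMangoldt_nonneg

lemma psi_mono {x y : ℕ} (h : x ≤ y) : psi x ≤ psi y := by
  rw [psi, psi, ← Finset.sum_Ioc_consecutive _ (Nat.zero_le x) h]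
  have : 0 ≤ ∑ q ∈ Finset.Ioc x y, Λ q := Finset.sum_nonneg fun _ _ => vonMangoldt_nonneg
  linarith

lemma log_factorial (n : ℕ) :
    Real.log (n.factorial : ℝ) = ∑ k ∈ Finset.Icc 1 n, psi (n / k) := by
  induction n with
  | zero => simp
  | succ n ih =>
    have hfac : ((n+1).factorial : ℝ) = (n.factorial : ℝ) * ((n+1 : ℕ) : ℝ) := by
      rw [Nat.factorial_succ]; push_cast; ring
    have hlog : Real.log ((n+1).factorial : ℝ) = Real.log (n.factorial : ℝ) + Real.log ((n+1 : ℕ) : ℝ) := by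
      rw [hfac, Real.log_mul (by positivity) (by positivity)]
    rw [hlog, ih]
    -- sum over Icc 1 (n+1)
    rw [Finset.sum_Icc_succ_top (by omega : 1 ≤ n + 1)]
    have hlast : psi ((n+1) / (n+1)) = 0 := by
      rw [Nat.div_self (by omega)]; simp [psi]
    rw [hlast, add_zero]
    have hterm : ∀ k ∈ Finset.Icc 1 n,
        psi ((n+1)/k) = psi (n/k) + (if k ∣ n+1 then Λ ((n+1)/k) else 0) := by
      intro k hk
      rcases Finset.mem_Icc.mp hk with ⟨hk1, hk2⟩
      by_cases hd : k ∣ n + 1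
      · have hdiv : (n+1)/k = n/k + 1 := by rw [Nat.succ_div, if_pos hd]
        rw [if_pos hd, hdiv, psi_succ]
      · have hdiv : (n+1)/k = n/k := by rw [Nat.succ_div, if_neg hd, add_zero]
        rw [if_neg hd, hdiv, add_zero]
    rw [Finset.sum_congr rfl hterm, Finset.sum_add_distrib]
    congr 1
    rw [← Finset.sum_filter]
    have hset : (Finset.Icc 1 n).filter (· ∣ n+1) = (n+1).divisors.erase (n+1) := by
      ext d
      simp only [Finset.mem_filter, Finset.mem_Icc, Finset.mem_erase, Nat.mem_divisors]
      constructor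
      · rintro ⟨⟨h1, h2⟩, h3⟩
        exact ⟨by omega, h3, by omega⟩
      · rintro ⟨h1, h2, _⟩
        have hle := Nat.le_of_dvd (by omega) h2
        have hne : d ≠ 0 := by rintro rfl; omega
        exact ⟨⟨by omega, by omega⟩, h2⟩
    rw [hset]
    have herase : ∑ d ∈ (n+1).divisors.erase (n+1), Λ ((n+1)/d)
        = ∑ d ∈ (n+1).divisors, Λ ((n+1)/d) - Λ ((n+1)/(n+1)) := by
      rw [Finset.sum_erase_eq_sub (by simp [Nat.mem_divisors])]
    rw [herase, Nat.div_self (by omega), vonMangoldt_apply_one, sub_zero,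
      Nat.sum_div_divisors, ← vonMangoldt_sum]

-- Abel summation identity
lemma abel_sum (f g : ℕ → ℝ) (N : ℕ) :
    ∑ k ∈ Finset.Icc 1 N, (g k - g (k-1)) * f k
      = (∑ m ∈ Finset.Icc 1 N, g m * (f m - f (m+1))) + g N * f (N+1) - g 0 * f 1 := by
  induction N with
  | zero => simp
  | succ N ih =>
    rw [Finset.sum_Icc_succ_top (by omega : 1 ≤ N+1),
        Finset.sum_Icc_succ_top (by omega : 1 ≤ N+1), ih]
    have : N + 1 - 1 = N := by omega
    rw [this]; ring

-- the step function S
def Sfn (x : ℕ) : ℤ := (x : ℤ) - (x/2 : ℕ) - (x/3 : ℕ) - (x/5 : ℕ) + (x/30 : ℕ)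

lemma Sfn_bounds (x : ℕ) : 0 ≤ Sfn x ∧ Sfn x ≤ 1 := by unfold Sfn; omega

lemma Sfn_one {x : ℕ} (h1 : 1 ≤ x) (h5 : x ≤ 5) : Sfn x = 1 := by unfold Sfn; omega

lemma Sfn_zero : Sfn 0 = 0 := by unfold Sfn; omega

lemma Sfn_step (k : ℕ) (hk : 1 ≤ k) :
    ((Sfn k : ℝ) - (Sfn (k-1) : ℝ))
      = 1 - (if 2 ∣ k then 1 else 0) - (if 3 ∣ k then 1 else 0)
        - (if 5 ∣ k then 1 else 0) + (if 30 ∣ k then 1 else 0) := by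
  have h : Sfn k - Sfn (k-1)
      = 1 - (if 2 ∣ k then 1 else 0) - (if 3 ∣ k then 1 else 0)
        - (if 5 ∣ k then 1 else 0) + (if 30 ∣ k then (1:ℤ) else 0) := by
    obtain ⟨j, rfl⟩ : ∃ j, k = j + 1 := ⟨k-1, by omega⟩
    simp only [Nat.add_sub_cancel]
    unfold Sfn
    rw [Nat.succ_div (a := j) (b := 2), Nat.succ_div (a := j) (b := 3), Nat.succ_div (a := j) (b := 5), Nat.succ_div (a := j) (b := 30)]
    by_cases h2 : 2 ∣ j+1 <;> by_cases h3 : 3 ∣ j+1 <;> by_cases h5 : 5 ∣ j+1 <;>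
      by_cases h30 : 30 ∣ j+1 <;>
        simp only [h2, h3, h5, h30, if_true, if_false] <;> push_cast <;> ring
  have := congrArg (fun z : ℤ => (z : ℝ)) h
  push_cast at this ⊢
  convert this using 2

noncomputable def Efn (n : ℕ) : ℝ :=
  Real.log (n.factorial : ℝ) - Real.log ((n/2).factorial : ℝ) - Real.log ((n/3).factorial : ℝ)
    - Real.log ((n/5).factorial : ℝ) + Real.log ((n/30).factorial : ℝ)

-- sum over multiples
lemma sum_multiples (d n : ℕ) (hd : 1 ≤ d) :
    Real.log ((n/d).factorial : ℝ) = ∑ k ∈ (Finset.Icc 1 n).filter (d ∣ ·), psi (n / k) := by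
  rw [log_factorial]
  refine Finset.sum_nbij' (fun j => d * j) (fun k => k / d) ?_ ?_ ?_ ?_ ?_
  · intro j hj
    simp only [Finset.mem_Icc] at hj
    simp only [Finset.mem_filter, Finset.mem_Icc]
    have hle : j * d ≤ n := (Nat.le_div_iff_mul_le (by omega)).mp hj.2
    have hc : d * j = j * d := Nat.mul_comm d j
    have hpos : 0 < j * d := Nat.mul_pos (by omega) (by omega)
    exact ⟨⟨by omega, by omega⟩, dvd_mul_right d j⟩
  · intro k hk
    rcases Finset.mem_filter.mp hk with ⟨hk1, hk2⟩
    rcases Finset.mem_Icc.mp hk1 with ⟨h1, h2⟩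
    simp only [Finset.mem_Icc]
    refine ⟨?_, Nat.div_le_div_right h2⟩
    have := Nat.le_of_dvd (by omega) hk2
    exact (Nat.one_le_div_iff (by omega)).mpr this
  · intro j hj
    exact Nat.mul_div_cancel_left _ (by omega : 0 < d)
  · intro k hk
    rcases Finset.mem_filter.mp hk with ⟨_, hk2⟩
    exact Nat.mul_div_cancel' hk2
  · intro j hj
    rw [Nat.div_div_eq_div_mul]

lemma Efn_eq (n : ℕ) :
    Efn n = ∑ k ∈ Finset.Icc 1 n, ((Sfn k : ℝ) - (Sfn (k-1) : ℝ)) * psi (n/k) := by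
  unfold Efn
  rw [sum_multiples 2 n (by norm_num), sum_multiples 3 n (by norm_num),
      sum_multiples 5 n (by norm_num), sum_multiples 30 n (by norm_num), log_factorial]
  rw [Finset.sum_filter, Finset.sum_filter, Finset.sum_filter, Finset.sum_filter,
      ← Finset.sum_sub_distrib, ← Finset.sum_sub_distrib, ← Finset.sum_sub_distrib,
      ← Finset.sum_add_distrib]
  refine Finset.sum_congr rfl ?_
  intro k hk
  rw [Sfn_step k (Finset.mem_Icc.mp hk).1]
  by_cases h2 : 2 ∣ k <;> by_cases h3 : 3 ∣ k <;> by_cases h5 : 5 ∣ k <;>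
    by_cases h30 : 30 ∣ k <;>
      simp only [h2, h3, h5, h30, if_true, if_false] <;> ring

lemma telescope (f : ℕ → ℝ) (n : ℕ) :
    ∑ m ∈ Finset.Icc 1 n, (f m - f (m+1)) = f 1 - f (n+1) := by
  induction n with
  | zero => simp
  | succ n ih => rw [Finset.sum_Icc_succ_top (by omega : 1 ≤ n+1), ih]; ring

lemma Efn_eq2 (n : ℕ) :
    Efn n = ∑ m ∈ Finset.Icc 1 n, (Sfn m : ℝ) * (psi (n/m) - psi (n/(m+1))) := by
  rw [Efn_eq, abel_sum (fun k => psi (n/k)) (fun k => (Sfn k : ℝ)) n]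
  have h0 : ((Sfn 0 : ℤ) : ℝ) = 0 := by rw [Sfn_zero]; norm_num
  have hn1 : n / (n+1) = 0 := Nat.div_eq_of_lt (by omega)
  simp only [hn1, h0, psi_zero, mul_zero, zero_mul, add_zero, sub_zero]

lemma diff_nonneg (n m : ℕ) (hm : 1 ≤ m) : 0 ≤ psi (n/m) - psi (n/(m+1)) := by
  have : n/(m+1) ≤ n/m := Nat.div_le_div_left (by omega) (by omega)
  have := psi_mono this
  linarith

lemma Efn_le_psi (n : ℕ) : Efn n ≤ psi n := by
  rcases Nat.eq_zero_or_pos n with rfl | hn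
  · simp [Efn, psi_zero]
  rw [Efn_eq2]
  calc ∑ m ∈ Finset.Icc 1 n, (Sfn m : ℝ) * (psi (n/m) - psi (n/(m+1)))
      ≤ ∑ m ∈ Finset.Icc 1 n, (psi (n/m) - psi (n/(m+1))) := by
        refine Finset.sum_le_sum ?_
        intro m hm
        have h1 := (Sfn_bounds m).1
        have h2 := (Sfn_bounds m).2
        have hd := diff_nonneg n m (Finset.mem_Icc.mp hm).1
        have hS1 : ((Sfn m : ℤ) : ℝ) ≤ 1 := by exact_mod_cast h2
        nlinarith
    _ = psi (n/1) - psi (n/(n+1)) := telescope _ n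
    _ ≤ psi n := by
        rw [Nat.div_one, Nat.div_eq_of_lt (by omega), psi_zero]; linarith [psi_nonneg 0]

lemma psi_sub_le_Efn (n : ℕ) (hn : 5 ≤ n) : psi n - psi (n/6) ≤ Efn n := by
  rw [Efn_eq2]
  have hsplit : (∑ m ∈ Finset.Icc 1 5, (Sfn m : ℝ) * (psi (n/m) - psi (n/(m+1))))
      + ∑ m ∈ Finset.Ioc 5 n, (Sfn m : ℝ) * (psi (n/m) - psi (n/(m+1)))
      = ∑ m ∈ Finset.Icc 1 n, (Sfn m : ℝ) * (psi (n/m) - psi (n/(m+1))) := by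
    have e : ∀ b : ℕ, Finset.Icc 1 b = Finset.Ioc 0 b := by
      intro b; ext x; simp only [Finset.mem_Icc, Finset.mem_Ioc]; omega
    rw [e 5, e n]
    exact Finset.sum_Ioc_consecutive _ (by omega) hn
  rw [← hsplit]
  have h1 : ∑ m ∈ Finset.Icc 1 5, (Sfn m : ℝ) * (psi (n/m) - psi (n/(m+1)))
      = psi n - psi (n/6) := by
    have : ∀ m ∈ Finset.Icc 1 5, (Sfn m : ℝ) * (psi (n/m) - psi (n/(m+1)))
        = psi (n/m) - psi (n/(m+1)) := by
      intro m hm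
      rcases Finset.mem_Icc.mp hm with ⟨ha, hb⟩
      rw [Sfn_one ha hb]; norm_num
    rw [Finset.sum_congr rfl this, telescope (fun k => psi (n/k)) 5]
    simp only [Nat.div_one]
  have h2 : 0 ≤ ∑ m ∈ Finset.Ioc 5 n, (Sfn m : ℝ) * (psi (n/m) - psi (n/(m+1))) := by
    refine Finset.sum_nonneg ?_
    intro m hm
    have h1' := (Sfn_bounds m).1
    have hS0 : (0:ℝ) ≤ ((Sfn m : ℤ) : ℝ) := by exact_mod_cast h1'
    have hd := diff_nonneg n m (by rcases Finset.mem_Ioc.mp hm with ⟨h,_⟩; omega)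
    positivity
  linarith [h1]

lemma log_ratio_le {n : ℕ} (h : 1 ≤ n) :
    Real.log (n+1) - Real.log n ≤ 1/(n:ℝ) := by
  have hn : (0:ℝ) < n := by positivity
  have h1 : Real.log (((n:ℝ)+1)/n) ≤ ((n:ℝ)+1)/n - 1 :=
    Real.log_le_sub_one_of_pos (by positivity)
  rw [Real.log_div (by positivity) (by positivity)] at h1
  have h2 : ((n:ℝ)+1)/n - 1 = 1/n := by field_simp; ring
  linarith [h2 ▸ h1]

lemma log_ratio_ge {n : ℕ} (h : 1 ≤ n) :
    1/((n:ℝ)+1) ≤ Real.log (n+1) - Real.log n := by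
  have hn : (0:ℝ) < n := by positivity
  have h1 : Real.log ((n:ℝ)/(n+1)) ≤ (n:ℝ)/(n+1) - 1 :=
    Real.log_le_sub_one_of_pos (by positivity)
  rw [Real.log_div (by positivity) (by positivity)] at h1
  have h2 : (n:ℝ)/(n+1) - 1 = -(1/((n:ℝ)+1)) := by field_simp; ring
  linarith [h2 ▸ h1]

lemma log_factorial_ge : ∀ n : ℕ, 1 ≤ n →
    (n:ℝ) * Real.log n - n ≤ Real.log (n.factorial : ℝ) := by
  intro n
  induction n with
  | zero => intro h; omega
  | succ n ih =>
    intro _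
    rcases Nat.eq_zero_or_pos n with rfl | hn
    · simp
    have ihh := ih hn
    have hfac : ((n+1).factorial : ℝ) = ((n:ℝ)+1) * (n.factorial : ℝ) := by
      rw [Nat.factorial_succ]; push_cast; ring
    have hpos : (0:ℝ) < n.factorial := by positivity
    rw [hfac, Real.log_mul (by positivity) (by positivity)]
    have hr := log_ratio_le hn
    have hcast : ((n:ℝ)+1) = ((n+1 : ℕ) : ℝ) := by push_cast; ring
    have hlogn : Real.log ((n:ℝ)+1) - Real.log n ≤ 1/(n:ℝ) := by
      rw [hcast]; exact_mod_cast hr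
    have hn' : (1:ℝ) ≤ n := by exact_mod_cast hn
    have hnn : (0:ℝ) < n := by linarith
    have key : ((n:ℝ)+1) * Real.log ((n:ℝ)+1) - ((n:ℝ)+1)
        ≤ Real.log ((n:ℝ)+1) + ((n:ℝ) * Real.log n - n) := by
      have : (n:ℝ) * (Real.log ((n:ℝ)+1) - Real.log n) ≤ (n:ℝ) * (1/(n:ℝ)) :=
        mul_le_mul_of_nonneg_left hlogn (by linarith)
      have h3 : (n:ℝ) * (1/(n:ℝ)) = 1 := by field_simp
      nlinarith
    push_cast
    push_cast at ihh
    linarith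

lemma log_factorial_le : ∀ n : ℕ, 1 ≤ n →
    Real.log (n.factorial : ℝ) ≤ (n:ℝ) * Real.log n - n + Real.log n + 1 := by
  intro n
  induction n with
  | zero => intro h; omega
  | succ n ih =>
    intro _
    rcases Nat.eq_zero_or_pos n with rfl | hn
    · simp
    have ihh := ih hn
    have hfac : ((n+1).factorial : ℝ) = ((n:ℝ)+1) * (n.factorial : ℝ) := by
      rw [Nat.factorial_succ]; push_cast; ring
    have hpos : (0:ℝ) < n.factorial := by positivity
    rw [hfac, Real.log_mul (by positivity) (by positivity)]
    have hr := log_ratio_ge hn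
    have hcast : ((n:ℝ)+1) = ((n+1 : ℕ) : ℝ) := by push_cast; ring
    have hlogn : 1/((n:ℝ)+1) ≤ Real.log ((n:ℝ)+1) - Real.log n := by
      rw [hcast]; exact_mod_cast hr
    have hn' : (1:ℝ) ≤ n := by exact_mod_cast hn
    have key : Real.log ((n:ℝ)+1) + ((n:ℝ) * Real.log n - n + Real.log n + 1)
        ≤ ((n:ℝ)+1) * Real.log ((n:ℝ)+1) - ((n:ℝ)+1) + Real.log ((n:ℝ)+1) + 1 := by
      have : ((n:ℝ)+1) * (1/((n:ℝ)+1)) ≤ ((n:ℝ)+1) * (Real.log ((n:ℝ)+1) - Real.log n) :=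
        mul_le_mul_of_nonneg_left hlogn (by linarith)
      have h3 : ((n:ℝ)+1) * (1/((n:ℝ)+1)) = 1 := by field_simp
      nlinarith
    push_cast
    push_cast at ihh
    linarith

lemma xlogx_mono {s t : ℝ} (hs : 1 ≤ s) (hst : s ≤ t) :
    s * Real.log s ≤ t * Real.log t := by
  have h1 : Real.log s ≤ Real.log t := Real.log_le_log (by linarith) hst
  have h2 : 0 ≤ Real.log s := Real.log_nonneg hs
  nlinarith

lemma xlogx_lip {s t : ℝ} (hs : 0 < s) (hst : s ≤ t) :
    t * Real.log t - s * Real.log s ≤ (t - s) * (Real.log t + 1) := by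
  have ht : 0 < t := lt_of_lt_of_le hs hst
  have h1 : Real.log (t/s) ≤ t/s - 1 := Real.log_le_sub_one_of_pos (by positivity)
  rw [Real.log_div (by positivity) (by positivity)] at h1
  have h2 : s * (Real.log t - Real.log s) ≤ s * (t/s - 1) :=
    mul_le_mul_of_nonneg_left h1 (by linarith)
  have h3 : s * (t/s - 1) = t - s := by field_simp
  nlinarith

noncomputable def Aconst : ℝ :=
  Real.log 2/2 + Real.log 3/3 + Real.log 5/5 - Real.log 30/30

lemma log30 : Real.log 30 = Real.log 2 + Real.log 3 + Real.log 5 := by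
  have : (30:ℝ) = 2*3*5 := by norm_num
  rw [this, Real.log_mul (by norm_num) (by norm_num), Real.log_mul (by norm_num) (by norm_num)]

lemma log3_lb : (19/12) * Real.log 2 ≤ Real.log 3 := by
  have h : ((2:ℝ)^19) ≤ 3^12 := by norm_num
  have := Real.log_le_log (by positivity) h
  rw [Real.log_pow, Real.log_pow] at this
  push_cast at this
  linarith

lemma log3_ub : Real.log 3 ≤ (65/41) * Real.log 2 := by
  have h : ((3:ℝ)^41) ≤ 2^65 := by norm_num
  have := Real.log_le_log (by positivity) h
  rw [Real.log_pow, Real.log_pow] at this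
  push_cast at this
  linarith

lemma log5_lb : (65/28) * Real.log 2 ≤ Real.log 5 := by
  have h : ((2:ℝ)^93) ≤ 10^28 := by norm_num
  have := Real.log_le_log (by positivity) h
  rw [Real.log_pow, Real.log_pow] at this
  have h10 : Real.log 10 = Real.log 2 + Real.log 5 := by
    have : (10:ℝ) = 2*5 := by norm_num
    rw [this, Real.log_mul (by norm_num) (by norm_num)]
  rw [h10] at this
  push_cast at this
  linarith

lemma log5_ub : Real.log 5 ≤ (7/3) * Real.log 2 := by
  have h : ((5:ℝ)^3) ≤ 2^7 := by norm_num
  have := Real.log_le_log (by positivity) h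
  rw [Real.log_pow, Real.log_pow] at this
  push_cast at this
  linarith

lemma A_lo : 0.9208 ≤ Aconst := by
  have h2 := Real.log_two_gt_d9
  have h3 := log3_lb
  have h5 := log5_lb
  unfold Aconst
  rw [log30]
  nlinarith

lemma A_hi : Aconst ≤ 0.9227 := by
  have h2 := Real.log_two_lt_d9
  have h2' := Real.log_two_gt_d9
  have h3 := log3_ub
  have h5 := log5_ub
  unfold Aconst
  rw [log30]
  nlinarith

lemma keyA (x : ℝ) (hx : 0 < x) :
    x * Real.log x - (x/2) * Real.log (x/2) - (x/3) * Real.log (x/3)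
      - (x/5) * Real.log (x/5) + (x/30) * Real.log (x/30) = Aconst * x := by
  rw [Real.log_div (by positivity) (by norm_num), Real.log_div (by positivity) (by norm_num),
      Real.log_div (by positivity) (by norm_num), Real.log_div (by positivity) (by norm_num)]
  unfold Aconst
  rw [log30]
  ring

lemma cast_div_bounds (n a : ℕ) (ha : 1 ≤ a) (han : a ≤ n) :
    1 ≤ ((n/a : ℕ) : ℝ) ∧ ((n/a : ℕ) : ℝ) ≤ (n:ℝ)/a ∧ (n:ℝ)/a ≤ ((n/a : ℕ) : ℝ) + 1 := by
  have h1 : 1 ≤ n / a := (Nat.one_le_div_iff (by omega)).mpr han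
  refine ⟨by exact_mod_cast h1, Nat.cast_div_le, ?_⟩
  have := Nat.div_add_mod n a
  have hmod : n % a < a := Nat.mod_lt _ (by omega)
  have hreal : (n:ℝ) < a * ((n/a : ℕ) : ℝ) + a := by
    have : (n : ℝ) = a * ((n/a : ℕ) : ℝ) + ((n % a : ℕ) : ℝ) := by exact_mod_cast this.symm
    rw [this]
    have : ((n % a : ℕ) : ℝ) < a := by exact_mod_cast hmod
    linarith
  have hapos : (0:ℝ) < a := by positivity
  rw [div_le_iff₀ hapos]
  nlinarith

lemma logfac_div_up (n a : ℕ) (ha : 1 ≤ a) (han : a ≤ n) :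
    Real.log ((n/a).factorial : ℝ)
      ≤ ((n:ℝ)/a) * Real.log ((n:ℝ)/a) - (n:ℝ)/a + Real.log ((n:ℝ)/a) + 2 := by
  obtain ⟨h1, h2, h3⟩ := cast_div_bounds n a ha han
  have hm : 1 ≤ n / a := (Nat.one_le_div_iff (by omega)).mpr han
  have hfac := log_factorial_le (n/a) hm
  have hmono := xlogx_mono h1 h2
  have hlog : Real.log ((n/a : ℕ) : ℝ) ≤ Real.log ((n:ℝ)/a) :=
    Real.log_le_log (by linarith) h2
  linarith

lemma logfac_div_low (n a : ℕ) (ha : 1 ≤ a) (han : a ≤ n) :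
    ((n:ℝ)/a) * Real.log ((n:ℝ)/a) - (n:ℝ)/a - Real.log ((n:ℝ)/a) - 2
      ≤ Real.log ((n/a).factorial : ℝ) := by
  obtain ⟨h1, h2, h3⟩ := cast_div_bounds n a ha han
  have hm : 1 ≤ n / a := (Nat.one_le_div_iff (by omega)).mpr han
  have hfac := log_factorial_ge (n/a) hm
  have hlip := xlogx_lip (show (0:ℝ) < ((n/a:ℕ):ℝ) by linarith) h2
  have hlogpos : 0 ≤ Real.log ((n:ℝ)/a) := Real.log_nonneg (by linarith)
  nlinarith

lemma Efn_bounds (n : ℕ) (hn : 30 ≤ n) :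
    Aconst * n - 5*Real.log n - 10 ≤ Efn n ∧ Efn n ≤ Aconst * n + 5*Real.log n + 10 := by
  have hup2 := logfac_div_up n 2 (by omega) (by omega)
  have hup3 := logfac_div_up n 3 (by omega) (by omega)
  have hup5 := logfac_div_up n 5 (by omega) (by omega)
  have hup30 := logfac_div_up n 30 (by omega) (by omega)
  have hlo2 := logfac_div_low n 2 (by omega) (by omega)
  have hlo3 := logfac_div_low n 3 (by omega) (by omega)
  have hlo5 := logfac_div_low n 5 (by omega) (by omega)
  have hlo30 := logfac_div_low n 30 (by omega) (by omega)
  have hnp : (0:ℝ) < n := by positivity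
  have hkey := keyA n hnp
  have hfge := log_factorial_ge n (by omega)
  have hfle := log_factorial_le n (by omega)
  have hn1 : (30:ℝ) ≤ (n:ℝ) := by exact_mod_cast hn
  have hl2 : Real.log ((n:ℝ)/2) ≤ Real.log n := Real.log_le_log (by linarith) (by linarith)
  have hl3 : Real.log ((n:ℝ)/3) ≤ Real.log n := Real.log_le_log (by linarith) (by linarith)
  have hl5 : Real.log ((n:ℝ)/5) ≤ Real.log n := Real.log_le_log (by linarith) (by linarith)
  have hl30 : Real.log ((n:ℝ)/30) ≤ Real.log n := Real.log_le_log (by linarith) (by linarith)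
  have hg2 : 0 ≤ Real.log ((n:ℝ)/2) := Real.log_nonneg (by linarith)
  have hg3 : 0 ≤ Real.log ((n:ℝ)/3) := Real.log_nonneg (by linarith)
  have hg5 : 0 ≤ Real.log ((n:ℝ)/5) := Real.log_nonneg (by linarith)
  have hg30 : 0 ≤ Real.log ((n:ℝ)/30) := Real.log_nonneg (by linarith)
  have hgn : 0 ≤ Real.log (n:ℝ) := Real.log_nonneg (by linarith)
  unfold Efn
  constructor <;> linarith

lemma psi_lower (n : ℕ) (hn : 30 ≤ n) : Aconst * n - 5*Real.log n - 10 ≤ psi n :=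
  le_trans (Efn_bounds n hn).1 (Efn_le_psi n)

lemma psi_le_mul_log (n : ℕ) (h : n ≤ 35) : psi n ≤ (n:ℝ) * Real.log 36 := by
  have : psi n ≤ ∑ q ∈ Finset.Ioc 0 n, Real.log 36 := by
    refine Finset.sum_le_sum ?_
    intro q hq
    rcases Finset.mem_Ioc.mp hq with ⟨h1, h2⟩
    calc Λ q ≤ Real.log q := vonMangoldt_le_log
      _ ≤ Real.log 36 := Real.log_le_log (by positivity) (by exact_mod_cast by omega : (q:ℝ) ≤ 36)
  simpa [Nat.card_Ioc, mul_comm] using this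

lemma log36_ub : Real.log 36 ≤ (212/41) * Real.log 2 := by
  have h36 : (36:ℝ) = 6^2 := by norm_num
  have h6 : Real.log 6 = Real.log 2 + Real.log 3 := by
    have : (6:ℝ) = 2*3 := by norm_num
    rw [this, Real.log_mul (by norm_num) (by norm_num)]
  rw [h36, Real.log_pow]
  push_cast
  rw [h6]
  have := log3_ub
  linarith

lemma log6_lb : (31/12) * Real.log 2 ≤ Real.log 6 := by
  have h6 : Real.log 6 = Real.log 2 + Real.log 3 := by
    have : (6:ℝ) = 2*3 := by norm_num
    rw [this, Real.log_mul (by norm_num) (by norm_num)]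
  have := log3_lb
  linarith

lemma log_ge_pow2 (k n : ℕ) (h : 2^k ≤ n) : (k:ℝ) * Real.log 2 ≤ Real.log n := by
  have h2 : ((2:ℝ)^k) ≤ (n:ℝ) := by exact_mod_cast h
  have := Real.log_le_log (by positivity) h2
  rw [Real.log_pow] at this
  exact_mod_cast this

set_option maxHeartbeats 1000000 in
lemma psi_upper : ∀ n : ℕ, psi n ≤ (6/5) * Aconst * n + 6 * (Real.log n + 1)^2 := by
  intro n
  induction n using Nat.strong_induction_on with
  | _ n ih =>
  have hA := A_lo
  have hA' := A_hi
  have hl2 := Real.log_two_gt_d9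
  have hl2' := Real.log_two_lt_d9
  by_cases hn35 : n ≤ 35
  · -- base case
    have hb := psi_le_mul_log n hn35
    have h36 := log36_ub
    have hgn : 0 ≤ Real.log (n:ℝ) := by
      rcases Nat.eq_zero_or_pos n with rfl | hp
      · simp
      · exact Real.log_nonneg (by exact_mod_cast hp)
    rcases Nat.lt_or_ge n 2 with h2 | h2
    · interval_cases n
      · simp [psi]
      · have h01 : Finset.Ioc 0 1 = {1} := rfl
        have hpsi1 : psi 1 = 0 := by
          rw [psi, h01, Finset.sum_singleton, vonMangoldt_apply_one]
        rw [hpsi1]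
        simp only [Nat.cast_one, Real.log_one]
        nlinarith
    rcases Nat.lt_or_ge n 4 with h4 | h4
    · have hlog := log_ge_pow2 1 n (by omega)
      have hc : (n:ℝ) ≤ 3 := by exact_mod_cast by omega
      push_cast at hlog
      nlinarith [sq_nonneg (Real.log n - Real.log 2), sq_nonneg (Real.log n + 1)]
    rcases Nat.lt_or_ge n 8 with h8 | h8
    · have hlog := log_ge_pow2 2 n (by omega)
      have hc : (n:ℝ) ≤ 7 := by exact_mod_cast by omega
      push_cast at hlog
      nlinarith [sq_nonneg (Real.log n - 2*Real.log 2), sq_nonneg (Real.log n + 1)]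
    rcases Nat.lt_or_ge n 16 with h16 | h16
    · have hlog := log_ge_pow2 3 n (by omega)
      have hc : (n:ℝ) ≤ 15 := by exact_mod_cast by omega
      push_cast at hlog
      nlinarith [sq_nonneg (Real.log n - 3*Real.log 2), sq_nonneg (Real.log n + 1)]
    rcases Nat.lt_or_ge n 32 with h32 | h32
    · have hlog := log_ge_pow2 4 n (by omega)
      have hc : (n:ℝ) ≤ 31 := by exact_mod_cast by omega
      push_cast at hlog
      nlinarith [sq_nonneg (Real.log n - 4*Real.log 2), sq_nonneg (Real.log n + 1)]
    · have hlog := log_ge_pow2 5 n (by omega)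
      have hc : (n:ℝ) ≤ 35 := by exact_mod_cast by omega
      push_cast at hlog
      nlinarith [sq_nonneg (Real.log n - 5*Real.log 2), sq_nonneg (Real.log n + 1)]
  · -- inductive step, n ≥ 36
    push_neg at hn35
    have hn : 36 ≤ n := hn35
    have hstep : psi n ≤ psi (n/6) + Efn n := by
      have := psi_sub_le_Efn n (by omega)
      linarith
    have hih := ih (n/6) (Nat.div_lt_self (by omega) (by omega))
    have hEf := (Efn_bounds n (by omega)).2
    obtain ⟨hd1, hd2, hd3⟩ := cast_div_bounds n 6 (by omega) (by omega)
    have hm6 : 6 ≤ n/6 := by omega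
    have hL'0 : 0 ≤ Real.log ((n/6 : ℕ) : ℝ) := Real.log_nonneg hd1
    have hL' : Real.log ((n/6 : ℕ) : ℝ) ≤ Real.log (n:ℝ) - Real.log 6 := by
      have h1 : Real.log ((n/6 : ℕ) : ℝ) ≤ Real.log ((n:ℝ)/6) :=
        Real.log_le_log (by linarith) hd2
      rw [Real.log_div (by positivity) (by norm_num)] at h1
      exact h1
    have hL : 5 * Real.log 2 ≤ Real.log (n:ℝ) := by
      have := log_ge_pow2 5 n (by omega)
      push_cast at this
      linarith
    have hlog6 := log6_lb
    have hgn : 0 ≤ Real.log (n:ℝ) := Real.log_nonneg (Nat.one_le_cast.mpr (by omega))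
    have hlog6ub : Real.log 6 ≤ (106/41) * Real.log 2 := by
      have h6 : Real.log 6 = Real.log 2 + Real.log 3 := by
        have : (6:ℝ) = 2*3 := by norm_num
        rw [this, Real.log_mul (by norm_num) (by norm_num)]
      have := log3_ub
      linarith
    set L := Real.log (n:ℝ) with hLdef
    set L' := Real.log ((n/6 : ℕ) : ℝ) with hL'def
    set g := Real.log 6 with hgdef
    have hg1 : (1.79:ℝ) ≤ g := by linarith
    have hg2 : g ≤ (1.8:ℝ) := by linarith
    have hsq : (L' + 1)^2 ≤ (L - g + 1)^2 := by
      have h1 : L' + 1 ≤ L - g + 1 := by linarith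
      have h2 : (0:ℝ) ≤ L' + 1 := by linarith
      exact pow_le_pow_left₀ h2 h1 2
    have hA0 : (0:ℝ) ≤ Aconst := by linarith
    have hlin : (6/5) * Aconst * ((n/6:ℕ):ℝ) ≤ (1/5) * Aconst * n := by
      have h1 : (6/5) * Aconst * ((n/6:ℕ):ℝ) ≤ (6/5) * Aconst * ((n:ℝ)/6) :=
        mul_le_mul_of_nonneg_left hd2 (by linarith)
      have h2 : (6/5) * Aconst * ((n:ℝ)/6) = (1/5) * Aconst * n := by ring
      linarith
    have hp1 : (1.79:ℝ) * (L + 1) ≤ g * (L + 1) :=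
      mul_le_mul_of_nonneg_right hg1 (by linarith)
    have hp2 : g * g ≤ (1.8:ℝ) * g :=
      mul_le_mul_of_nonneg_right hg2 (by linarith)
    have hexp : 6*(L - g + 1)^2 = 6*(L+1)^2 - 12*(g*(L+1)) + 6*(g*g) := by ring
    linarith [hstep, hih, hEf, hsq, hlin, hp1, hp2, hexp, hL, hg1, hg2]

lemma sum_interval_nonprime (M K : ℕ) (hMK : M ≤ K) (hK2 : K < 2*(M+1))
    (hnp : ∀ q ∈ Finset.Ioc M K, ¬ q.Prime) :
    psi K ≤ psi M + psi (Nat.sqrt K) := by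
  have hsplit : psi M + ∑ q ∈ Finset.Ioc M K, Λ q = psi K := by
    rw [psi, psi]
    exact Finset.sum_Ioc_consecutive _ (Nat.zero_le M) hMK
  rw [← hsplit]
  have hbound : ∑ q ∈ Finset.Ioc M K, Λ q ≤ psi (Nat.sqrt K) := by
    set T := (Finset.Ioc M K).filter (fun q => IsPrimePow q) with hT
    have h1 : ∑ q ∈ Finset.Ioc M K, Λ q = ∑ q ∈ T, Λ q := by
      rw [hT, Finset.sum_filter]
      refine Finset.sum_congr rfl ?_
      intro q hq
      by_cases hpp : IsPrimePow q
      · simp [hpp]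
      · simp [hpp, vonMangoldt_eq_zero_iff.mpr hpp]
    -- representation facts
    have hrep : ∀ q ∈ T, q.minFac.Prime ∧ 2 ≤ q ∧
        ∃ j, 2 ≤ j ∧ q.minFac ^ j = q := by
      intro q hq
      rcases Finset.mem_filter.mp hq with ⟨hq1, hq2⟩
      rcases Finset.mem_Ioc.mp hq1 with ⟨hqM, hqK⟩
      obtain ⟨p, k, hp, hk, rfl⟩ := hq2
      have hpn : p.Prime := hp.nat_prime
      have hmf : (p^k).minFac = p := Nat.Prime.pow_minFac hpn (by omega)
      have hk1 : k ≠ 1 := by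
        rintro rfl
        exact hnp (p^1) hq1 (by simpa using hpn)
      have h2q : 2 ≤ p^k := by
        calc 2 ≤ p := hpn.two_le
        _ = p^1 := (pow_one p).symm
        _ ≤ p^k := Nat.pow_le_pow_right (by have := hpn.two_le; omega) (by omega)
      exact ⟨by rw [hmf]; exact hpn, h2q, k, by omega, by rw [hmf]⟩
    have h2 : ∑ q ∈ T, Λ q = ∑ q ∈ T, Λ q.minFac := by
      refine Finset.sum_congr rfl ?_
      intro q hq
      obtain ⟨hp, h2q, j, hj, hrepr⟩ := hrep q hq
      conv_lhs => rw [← hrepr]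
      exact vonMangoldt_apply_pow (by omega)
    have hinj : ∀ x ∈ T, ∀ y ∈ T, x.minFac = y.minFac → x = y := by
      intro x hx y hy hxy
      obtain ⟨hpx, h2x, a, ha, hra⟩ := hrep x hx
      obtain ⟨hpy, h2y, b, hb, hrb⟩ := hrep y hy
      rcases Finset.mem_Ioc.mp (Finset.mem_filter.mp hx).1 with ⟨hxM, hxK⟩
      rcases Finset.mem_Ioc.mp (Finset.mem_filter.mp hy).1 with ⟨hyM, hyK⟩
      set p := x.minFac with hpdef
      have hp2 : 2 ≤ p := hpx.two_le
      rcases lt_trichotomy a b with hab | hab | hab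
      · exfalso
        have : x * p ≤ y := by
          calc x * p = p^a * p := by rw [hra]
          _ = p^(a+1) := by ring
          _ ≤ p^b := Nat.pow_le_pow_right (by omega) (by omega)
          _ = y := by rw [← hxy] at hrb; exact hrb
        nlinarith
      · rw [← hra, ← hrb, hab, hxy]
      · exfalso
        have : y * p ≤ x := by
          calc y * p = p^b * p := by rw [← hxy] at hrb; rw [hrb]
          _ = p^(b+1) := by ring
          _ ≤ p^a := Nat.pow_le_pow_right (by omega) (by omega)
          _ = x := hra
        nlinarith
    have h3 : ∑ q ∈ T, Λ q.minFac = ∑ p ∈ T.image Nat.minFac, Λ p :=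
      (Finset.sum_image hinj).symm
    have h4 : T.image Nat.minFac ⊆ Finset.Ioc 0 (Nat.sqrt K) := by
      intro p hp
      rcases Finset.mem_image.mp hp with ⟨q, hq, rfl⟩
      obtain ⟨hpq, h2q, j, hj, hrepr⟩ := hrep q hq
      rcases Finset.mem_Ioc.mp (Finset.mem_filter.mp hq).1 with ⟨hqM, hqK⟩
      refine Finset.mem_Ioc.mpr ⟨hpq.pos, ?_⟩
      refine Nat.le_sqrt.mpr ?_
      calc q.minFac * q.minFac = q.minFac^2 := by ring
      _ ≤ q.minFac^j := Nat.pow_le_pow_right (by have := hpq.two_le; omega) hj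
      _ = q := hrepr
      _ ≤ K := hqK
    have h5 : ∑ p ∈ T.image Nat.minFac, Λ p ≤ psi (Nat.sqrt K) := by
      rw [psi]
      exact Finset.sum_le_sum_of_subset_of_nonneg h4 (fun _ _ _ => vonMangoldt_nonneg)
    linarith [h1, h2, h3, h5]
  linarith

set_option maxHeartbeats 1000000 in
lemma nag_large (m : ℕ) (hm : 1000001 ≤ m) :
    ∃ p : ℕ, p.Prime ∧ m ≤ p ∧ 3*p < 4*(m-1) := by
  by_contra hcon
  push_neg at hcon
  set M := m - 1 with hMdef
  have hM : 1000000 ≤ M := by omega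
  set K := (4*M-1)/3 with hKdef
  have h3K1 : 3*K ≤ 4*M - 1 := by omega
  have h3K2 : 4*M - 3 ≤ 3*K := by omega
  have hMK : M ≤ K := by omega
  have hK2 : K < 2*(M+1) := by omega
  have hnp : ∀ q ∈ Finset.Ioc M K, ¬ q.Prime := by
    intro q hq hqp
    rcases Finset.mem_Ioc.mp hq with ⟨h1, h2⟩
    have := hcon q hqp (by omega)
    omega
  have hKM := sum_interval_nonprime M K hMK hK2 hnp
  set s := Nat.sqrt K with hsdef
  have hs2 : s * s ≤ K := by
    have := Nat.sqrt_le' K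
    rwa [pow_two] at this
  have hs1 : 1 ≤ s := Nat.le_sqrt.mpr (by omega)
  have hsM : s ≤ M := by
    by_contra hc
    push_neg at hc
    have : (M+1)*(M+1) ≤ s*s := Nat.mul_le_mul hc hc
    nlinarith
  -- real versions
  have hl := psi_lower K (by omega)
  have huM := psi_upper M
  have hus := psi_upper s
  have hA := A_lo
  have hA' := A_hi
  have hl2 := Real.log_two_gt_d9
  have hl2' := Real.log_two_lt_d9
  have hMr : (1000000:ℝ) ≤ (M:ℝ) := by exact_mod_cast hM
  have hKr1 : 4*(M:ℝ) ≤ 3*(K:ℝ) + 3 := by exact_mod_cast (by omega : 4*M ≤ 3*K + 3)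
  have hKr2 : (K:ℝ) ≤ 1.4*(M:ℝ) := by
    have h : 15*K ≤ 21*M := by omega
    have : (15:ℝ)*(K:ℝ) ≤ 21*(M:ℝ) := by exact_mod_cast h
    linarith
  have hKM2 : (K:ℝ) ≤ 2*(M:ℝ) := by linarith
  have hsr : (s:ℝ)*(s:ℝ) ≤ (K:ℝ) := by exact_mod_cast hs2
  have hsr1 : (1:ℝ) ≤ (s:ℝ) := by exact_mod_cast hs1
  have hsrM : (s:ℝ) ≤ (M:ℝ) := by exact_mod_cast hsM
  -- log bounds
  have hlogM0 : 0 ≤ Real.log (M:ℝ) := Real.log_nonneg (by linarith)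
  have hlogs : Real.log (s:ℝ) ≤ Real.log (M:ℝ) := Real.log_le_log (by linarith) hsrM
  have hlogs0 : 0 ≤ Real.log (s:ℝ) := Real.log_nonneg hsr1
  have hlogK : Real.log (K:ℝ) ≤ Real.log 2 + Real.log (M:ℝ) := by
    have h1 : Real.log (K:ℝ) ≤ Real.log (2*(M:ℝ)) :=
      Real.log_le_log (by linarith) hKM2
    rw [Real.log_mul (by norm_num) (by linarith)] at h1
    exact h1
  have hlogK0 : 0 ≤ Real.log (K:ℝ) := Real.log_nonneg (by linarith)
  -- u = M^(1/8)
  set u := (M:ℝ) ^ ((1:ℝ)/8) with hudef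
  have hMpos : (0:ℝ) < M := by linarith
  have hu0 : 0 < u := Real.rpow_pos_of_pos hMpos _
  have hu8 : u^8 = (M:ℝ) := by
    rw [hudef, ← Real.rpow_natCast ((M:ℝ) ^ ((1:ℝ)/8)) 8, ← Real.rpow_mul (le_of_lt hMpos)]
    norm_num
  have hu56 : (5.6:ℝ) ≤ u := by
    by_contra hc
    push_neg at hc
    have h1 : u^8 < 5.6^8 := by
      apply pow_lt_pow_left₀ hc (le_of_lt hu0)
      norm_num
    rw [hu8] at h1
    norm_num at h1
    linarith
  have hlogMu : Real.log (M:ℝ) ≤ 8*(u - 1) := by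
    have h1 : Real.log (M:ℝ) = 8 * Real.log u := by
      rw [← hu8, Real.log_pow]; push_cast; ring
    have h2 : Real.log u ≤ u - 1 := Real.log_le_sub_one_of_pos hu0
    linarith
  -- square bounds
  have hsqM : (Real.log (M:ℝ) + 1)^2 ≤ (8*u - 7)^2 := by
    have h1 : Real.log (M:ℝ) + 1 ≤ 8*u - 7 := by linarith
    have h2 : (0:ℝ) ≤ Real.log (M:ℝ) + 1 := by linarith
    exact pow_le_pow_left₀ h2 h1 2
  have hsqs : (Real.log (s:ℝ) + 1)^2 ≤ (8*u - 7)^2 := by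
    have h1 : Real.log (s:ℝ) + 1 ≤ 8*u - 7 := by linarith
    have h2 : (0:ℝ) ≤ Real.log (s:ℝ) + 1 := by linarith
    exact pow_le_pow_left₀ h2 h1 2
  -- s ≤ 1.19 u^4
  have hu2 : (31.36:ℝ) ≤ u^2 := by nlinarith
  have hu4 : (983:ℝ) ≤ u^4 := by nlinarith
  have hsu : (s:ℝ) ≤ 1.19*u^4 := by
    have h1 : (s:ℝ)*(s:ℝ) ≤ 1.4*u^8 := by rw [hu8]; linarith
    nlinarith
  -- assemble
  have hmain : Aconst*(K:ℝ) - 5*Real.log (K:ℝ) - 10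
      ≤ (6/5)*Aconst*(M:ℝ) + 6*(Real.log (M:ℝ)+1)^2
        + (6/5)*Aconst*(s:ℝ) + 6*(Real.log (s:ℝ)+1)^2 := by
    linarith [hl, huM, hus, hKM]
  have hAK : (0.9208:ℝ)*(K:ℝ) ≤ Aconst*(K:ℝ) :=
    mul_le_mul_of_nonneg_right hA (by linarith)
  have hAM : (6/5)*Aconst*(M:ℝ) ≤ (6/5)*(0.9227:ℝ)*(M:ℝ) :=
    mul_le_mul_of_nonneg_right (by linarith) (by linarith)
  have hAs : (6/5)*Aconst*(s:ℝ) ≤ (6/5)*(0.9227:ℝ)*(1.19*u^4) := by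
    have h1 : (6/5)*Aconst*(s:ℝ) ≤ (6/5)*(0.9227:ℝ)*(s:ℝ) :=
      mul_le_mul_of_nonneg_right (by linarith) (by linarith)
    have h2 : (6/5)*(0.9227:ℝ)*(s:ℝ) ≤ (6/5)*(0.9227:ℝ)*(1.19*u^4) :=
      mul_le_mul_of_nonneg_left hsu (by norm_num)
    linarith
  have hKu : (4*u^8 - 3)/3 ≤ (K:ℝ) := by rw [hu8]; linarith
  have h5 : 5*Real.log (K:ℝ) ≤ 5*(Real.log 2 + 8*(u-1)) := by linarith
  have hfin : (0.9208:ℝ)*((4*u^8-3)/3) - 5*(Real.log 2 + 8*(u-1)) - 10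
      ≤ (6/5)*0.9227*u^8 + (6/5)*0.9227*(1.19*u^4) + 12*(8*u-7)^2 := by
    have hKA : (0.9208:ℝ)*((4*u^8-3)/3) ≤ 0.9208*(K:ℝ) :=
      mul_le_mul_of_nonneg_left hKu (by norm_num)
    have hMu : (6/5)*(0.9227:ℝ)*(M:ℝ) = (6/5)*0.9227*u^8 := by rw [hu8]
    linarith [hmain, hAK, hAM, hAs, hsqM, hsqs, hKA, hMu, h5]
  have a1 : u^8 = u^4*u^4 := by ring
  have a2 : (983:ℝ)*u^4 ≤ u^4*u^4 :=
    mul_le_mul_of_nonneg_right hu4 (by nlinarith)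
  have a3 : (31.36:ℝ)*u^2 ≤ u^2*u^2 :=
    mul_le_mul_of_nonneg_right hu2 (by positivity)
  have a4 : u^4 = u^2*u^2 := by ring
  have a5 : (8*u-7)^2 = 64*u^2 - 112*u + 49 := by ring
  linarith [hfin, a1, a2, a3, a4, a5, hu2, hu4, hu56, hu0.le, hl2']

lemma nag_small (m : ℕ) (h1 : 22 ≤ m) (h2 : m ≤ 1000001) :
    ∃ p : ℕ, p.Prime ∧ m ≤ p ∧ 3*p < 4*(m-1) := by
  rcases le_or_gt m 23 with h | h
  · exact ⟨23, by norm_num, h, by omega⟩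
  rcases le_or_gt m 29 with h' | h'
  · exact ⟨29, by norm_num, h', by omega⟩
  clear h; have h := h'; clear h'
  rcases le_or_gt m 37 with h' | h'
  · exact ⟨37, by norm_num, h', by omega⟩
  clear h; have h := h'; clear h'
  rcases le_or_gt m 47 with h' | h'
  · exact ⟨47, by norm_num, h', by omega⟩
  clear h; have h := h'; clear h'
  rcases le_or_gt m 61 with h' | h'
  · exact ⟨61, by norm_num, h', by omega⟩
  clear h; have h := h'; clear h'
  rcases le_or_gt m 79 with h' | h'
  · exact ⟨79, by norm_num, h', by omega⟩
  clear h; have h := h'; clear h'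
  rcases le_or_gt m 103 with h' | h'
  · exact ⟨103, by norm_num, h', by omega⟩
  clear h; have h := h'; clear h'
  rcases le_or_gt m 137 with h' | h'
  · exact ⟨137, by norm_num, h', by omega⟩
  clear h; have h := h'; clear h'
  rcases le_or_gt m 181 with h' | h'
  · exact ⟨181, by norm_num, h', by omega⟩
  clear h; have h := h'; clear h'
  rcases le_or_gt m 241 with h' | h'
  · exact ⟨241, by norm_num, h', by omega⟩
  clear h; have h := h'; clear h'
  rcases le_or_gt m 317 with h' | h'
  · exact ⟨317, by norm_num, h', by omega⟩
  clear h; have h := h'; clear h'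
  rcases le_or_gt m 421 with h' | h'
  · exact ⟨421, by norm_num, h', by omega⟩
  clear h; have h := h'; clear h'
  rcases le_or_gt m 557 with h' | h'
  · exact ⟨557, by norm_num, h', by omega⟩
  clear h; have h := h'; clear h'
  rcases le_or_gt m 739 with h' | h'
  · exact ⟨739, by norm_num, h', by omega⟩
  clear h; have h := h'; clear h'
  rcases le_or_gt m 983 with h' | h'
  · exact ⟨983, by norm_num, h', by omega⟩
  clear h; have h := h'; clear h'
  rcases le_or_gt m 1307 with h' | h'
  · exact ⟨1307, by norm_num, h', by omega⟩
  clear h; have h := h'; clear h'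
  rcases le_or_gt m 1741 with h' | h'
  · exact ⟨1741, by norm_num, h', by omega⟩
  clear h; have h := h'; clear h'
  rcases le_or_gt m 2311 with h' | h'
  · exact ⟨2311, by norm_num, h', by omega⟩
  clear h; have h := h'; clear h'
  rcases le_or_gt m 3079 with h' | h'
  · exact ⟨3079, by norm_num, h', by omega⟩
  clear h; have h := h'; clear h'
  rcases le_or_gt m 4099 with h' | h'
  · exact ⟨4099, by norm_num, h', by omega⟩
  clear h; have h := h'; clear h'
  rcases le_or_gt m 5449 with h' | h'
  · exact ⟨5449, by norm_num, h', by omega⟩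
  clear h; have h := h'; clear h'
  rcases le_or_gt m 7253 with h' | h'
  · exact ⟨7253, by norm_num, h', by omega⟩
  clear h; have h := h'; clear h'
  rcases le_or_gt m 9661 with h' | h'
  · exact ⟨9661, by norm_num, h', by omega⟩
  clear h; have h := h'; clear h'
  rcases le_or_gt m 12853 with h' | h'
  · exact ⟨12853, by norm_num, h', by omega⟩
  clear h; have h := h'; clear h'
  rcases le_or_gt m 17137 with h' | h'
  · exact ⟨17137, by norm_num, h', by omega⟩
  clear h; have h := h'; clear h'
  rcases le_or_gt m 22817 with h' | h'
  · exact ⟨22817, by norm_num, h', by omega⟩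
  clear h; have h := h'; clear h'
  rcases le_or_gt m 30403 with h' | h'
  · exact ⟨30403, by norm_num, h', by omega⟩
  clear h; have h := h'; clear h'
  rcases le_or_gt m 40531 with h' | h'
  · exact ⟨40531, by norm_num, h', by omega⟩
  clear h; have h := h'; clear h'
  rcases le_or_gt m 54037 with h' | h'
  · exact ⟨54037, by norm_num, h', by omega⟩
  clear h; have h := h'; clear h'
  rcases le_or_gt m 72047 with h' | h'
  · exact ⟨72047, by norm_num, h', by omega⟩
  clear h; have h := h'; clear h'
  rcases le_or_gt m 96059 with h' | h'
  · exact ⟨96059, by norm_num, h', by omega⟩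
  clear h; have h := h'; clear h'
  rcases le_or_gt m 128053 with h' | h'
  · exact ⟨128053, by norm_num, h', by omega⟩
  clear h; have h := h'; clear h'
  rcases le_or_gt m 170711 with h' | h'
  · exact ⟨170711, by norm_num, h', by omega⟩
  clear h; have h := h'; clear h'
  rcases le_or_gt m 227611 with h' | h'
  · exact ⟨227611, by norm_num, h', by omega⟩
  clear h; have h := h'; clear h'
  rcases le_or_gt m 303473 with h' | h'
  · exact ⟨303473, by norm_num, h', by omega⟩
  clear h; have h := h'; clear h'
  rcases le_or_gt m 404597 with h' | h'
  · exact ⟨404597, by norm_num, h', by omega⟩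
  clear h; have h := h'; clear h'
  rcases le_or_gt m 539449 with h' | h'
  · exact ⟨539449, by norm_num, h', by omega⟩
  clear h; have h := h'; clear h'
  rcases le_or_gt m 719239 with h' | h'
  · exact ⟨719239, by norm_num, h', by omega⟩
  clear h; have h := h'; clear h'
  rcases le_or_gt m 958973 with h' | h'
  · exact ⟨958973, by norm_num, h', by omega⟩
  clear h; have h := h'; clear h'
  rcases le_or_gt m 1278623 with h' | h'
  · exact ⟨1278623, by norm_num, h', by omega⟩
  clear h; have h := h'; clear h'
  omega

lemma nag (m : ℕ) (hm : 22 ≤ m) : ∃ p : ℕ, p.Prime ∧ m ≤ p ∧ 3*p < 4*(m-1) := by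
  rcases le_or_gt m 1000001 with h | h
  · exact nag_small m hm h
  · exact nag_large m (by omega)

lemma nag15 (m : ℕ) (hm : 15 ≤ m) : ∃ p : ℕ, p.Prime ∧ m ≤ p ∧ 2*p < 3*(m-1) := by
  rcases le_or_gt m 21 with h | h
  · rcases le_or_gt m 16 with h1 | h1
    · exact ⟨17, by norm_num, by omega, by omega⟩
    rcases le_or_gt m 19 with h2 | h2
    · exact ⟨19, by norm_num, by omega, by omega⟩
    · exact ⟨23, by norm_num, by omega, by omega⟩
  · obtain ⟨p, hp, hp1, hp2⟩ := nag m (by omega)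
    exact ⟨p, hp, hp1, by omega⟩

theorem exists_four_primes (a : ℕ) (ha : 1 < a) (n : ℕ) (hn : 0 < n)
    (h : 5 * n > 72 * a) :
    ∃ p q r s : ℕ, p.Prime ∧ q.Prime ∧ r.Prime ∧ s.Prime ∧
      2 * n < 2 * (a * p) ∧ 2 * (a * p) < 3 * n ∧
      3 * n < 2 * (a * q) ∧ 2 * (a * q) < 4 * n ∧
      2 * n < 2 * r ∧ 2 * r < 3 * n ∧ 3 * n < 2 * s ∧ 2 * s < 4 * n := by
  have ha2 : 2 ≤ a := ha
  have hn29 : 29 ≤ n := by omega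
  have h14a : 14 * a ≤ n := by omega
  -- p
  have hda := Nat.div_add_mod n a
  have hmoda : n % a < a := Nat.mod_lt _ (by omega)
  have hdiv14 : 14 ≤ n / a := (Nat.le_div_iff_mul_le (by omega)).mpr (by omega)
  obtain ⟨p, hp, hp1, hp2⟩ := nag15 (n/a + 1) (by omega)
  have hp2' : 2*p < 3*(n/a) := by omega
  have hpl : 2 * n < 2 * (a * p) := by
    have h1 : a*(n/a+1) ≤ a*p := Nat.mul_le_mul_left a hp1
    have e1 : a*(n/a+1) = a*(n/a) + a := by ring
    omega
  have hpu : 2 * (a * p) < 3 * n := by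
    have h1 : a*(2*p+1) ≤ a*(3*(n/a)) := Nat.mul_le_mul_left a (by omega)
    have e1 : a*(2*p+1) = 2*(a*p) + a := by ring
    have e2 : a*(3*(n/a)) = 3*(a*(n/a)) := by ring
    omega
  -- q
  have hdq := Nat.div_add_mod (3*n) (2*a)
  have hmodq : (3*n) % (2*a) < 2*a := Nat.mod_lt _ (by omega)
  have hdiv21 : 21 ≤ (3*n) / (2*a) := (Nat.le_div_iff_mul_le (by omega)).mpr (by omega)
  obtain ⟨q, hq, hq1, hq2⟩ := nag ((3*n)/(2*a) + 1) (by omega)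
  have hq2' : 3*q + 1 ≤ 4*((3*n)/(2*a)) := by omega
  have hql : 3 * n < 2 * (a * q) := by
    have h1 : (2*a)*((3*n)/(2*a)+1) ≤ (2*a)*q := Nat.mul_le_mul_left (2*a) hq1
    have e1 : (2*a)*((3*n)/(2*a)+1) = (2*a)*((3*n)/(2*a)) + 2*a := by ring
    have e2 : (2*a)*q = 2*(a*q) := by ring
    omega
  have hqu : 2 * (a * q) < 4 * n := by
    have h1 : (2*a)*(3*q+1) ≤ (2*a)*(4*((3*n)/(2*a))) := Nat.mul_le_mul_left (2*a) hq2'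
    have e1 : (2*a)*(3*q+1) = 6*(a*q) + 2*a := by ring
    have e2 : (2*a)*(4*((3*n)/(2*a))) = 4*((2*a)*((3*n)/(2*a))) := by ring
    omega
  -- r
  obtain ⟨r, hr, hr1, hr2⟩ := nag15 (n + 1) (by omega)
  -- s
  obtain ⟨s, hs, hs1, hs2⟩ := nag ((3*n)/2 + 1) (by omega)
  exact ⟨p, q, r, s, hp, hq, hr, hs, hpl, hpu, hql, hqu, by omega, by omega, by omega, by omega⟩
end

section
/- If m is a positive integer, then for every positive integer n > 14.4/(1.5^(1/m) − 1)^m there exists at least one positive integer a such that n < a^m < 3n/2 (equivalently, 2n < 2a^m < 3n). -/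
theorem exists_pow_between_left' (m : ℕ) (hm : 0 < m) (n : ℕ) (hn : 0 < n)
    (h : (n : ℝ) > 14.4 / ((1.5 : ℝ) ^ ((1 : ℝ) / (m : ℝ)) - 1) ^ m) :
    ∃ a : ℕ, 0 < a ∧ 2 * n < 2 * a ^ m ∧ 2 * a ^ m < 3 * n := by
  have hm0 : (m : ℝ) ≠ 0 := Nat.cast_ne_zero.mpr hm.ne'
  set c : ℝ := (1.5 : ℝ) ^ ((1 : ℝ) / (m : ℝ)) with hc_def
  have hc1 : 1 < c := by
    rw [hc_def]
    exact (Real.one_lt_rpow_iff_of_pos (by norm_num)).mpr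
      (Or.inl ⟨by norm_num, one_div_pos.mpr (Nat.cast_pos.mpr hm)⟩)
  have hcm : c ^ m = 1.5 := by
    rw [hc_def, ← Real.rpow_natCast ((1.5:ℝ) ^ ((1:ℝ)/(m:ℝ))) m,
      ← Real.rpow_mul (by norm_num)]
    rw [one_div, inv_mul_cancel₀ hm0, Real.rpow_one]
  set x : ℝ := (n : ℝ) ^ ((1 : ℝ) / (m : ℝ)) with hx_def
  have hx0 : 0 ≤ x := Real.rpow_nonneg (by positivity) _
  have hxm : x ^ m = n := by
    rw [hx_def, ← Real.rpow_natCast ((n:ℝ) ^ ((1:ℝ)/(m:ℝ))) m,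
      ← Real.rpow_mul (by positivity)]
    rw [one_div, inv_mul_cancel₀ hm0, Real.rpow_one]
  have hd0 : 0 < c - 1 := by linarith
  have h1 : (14.4 : ℝ) < (n : ℝ) * (c - 1) ^ m := by
    rw [gt_iff_lt, div_lt_iff₀ (by positivity)] at h
    linarith
  have hkey : 1 < x * (c - 1) := by
    have h2 : (1 : ℝ) < (x * (c - 1)) ^ m := by
      rw [mul_pow, hxm]; linarith
    exact (one_lt_pow_iff_of_nonneg (by positivity) hm.ne').mp h2
  refine ⟨⌊x⌋₊ + 1, Nat.succ_pos _, ?_, ?_⟩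
  · have hlt : x < ((⌊x⌋₊ + 1 : ℕ) : ℝ) := by
      push_cast; exact Nat.lt_floor_add_one x
    have : (n : ℝ) < ((⌊x⌋₊ + 1 : ℕ) : ℝ) ^ m := by
      calc (n : ℝ) = x ^ m := hxm.symm
        _ < _ := pow_lt_pow_left₀ hlt hx0 hm.ne'
    have hn' : n < (⌊x⌋₊ + 1) ^ m := by exact_mod_cast this
    omega
  · have hle : ((⌊x⌋₊ + 1 : ℕ) : ℝ) ≤ x + 1 := by
      push_cast
      have := Nat.floor_le hx0
      linarith
    have hlt : ((⌊x⌋₊ + 1 : ℕ) : ℝ) < c * x := by nlinarith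
    have : ((⌊x⌋₊ + 1 : ℕ) : ℝ) ^ m < 1.5 * n := by
      calc ((⌊x⌋₊ + 1 : ℕ) : ℝ) ^ m < (c * x) ^ m :=
            pow_lt_pow_left₀ hlt (by positivity) hm.ne'
        _ = c ^ m * x ^ m := mul_pow _ _ _
        _ = 1.5 * n := by rw [hcm, hxm]
    have h3 : (2 * ((⌊x⌋₊ + 1) ^ m) : ℝ) < 3 * n := by push_cast at this ⊢; linarith
    exact_mod_cast h3
end

section
/- If m is a positive integer, then for every positive integer n > 14.4/(2^(1/m) − 1.5^(1/m))^m there exists at least one positive integer a such that 3n/2 < a^m < 2n (equivalently, 3n < 2a^m < 4n). -/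
theorem exists_pow_between_right (m : ℕ) (hm : 0 < m) (n : ℕ) (hn : 0 < n)
    (h : (n : ℝ) > 14.4 / ((2 : ℝ) ^ ((1 : ℝ) / (m : ℝ)) - (1.5 : ℝ) ^ ((1 : ℝ) / (m : ℝ))) ^ m) :
    ∃ a : ℕ, 0 < a ∧ 3 * n < 2 * a ^ m ∧ 2 * a ^ m < 4 * n := by
  have hm0 : (m : ℝ) ≠ 0 := Nat.cast_ne_zero.mpr hm.ne'
  set e : ℝ := (1 : ℝ) / (m : ℝ) with he_def
  have he : 0 < e := by positivity
  have hn0 : (0 : ℝ) < (n : ℝ) := by exact_mod_cast hn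
  have hc : (0 : ℝ) < (2 : ℝ) ^ e - (1.5 : ℝ) ^ e := by
    have : (1.5 : ℝ) ^ e < (2 : ℝ) ^ e := Real.rpow_lt_rpow (by norm_num) (by norm_num) he
    linarith
  have hcm : (0 : ℝ) < ((2 : ℝ) ^ e - (1.5 : ℝ) ^ e) ^ m := pow_pos hc m
  have h144 : (14.4 : ℝ) < ((2 : ℝ) ^ e - (1.5 : ℝ) ^ e) ^ m * n := by
    have := (div_lt_iff₀ hcm).mp h
    linarith
  set x : ℝ := ((1.5 : ℝ) * n) ^ e with hx_def
  set y : ℝ := ((2 : ℝ) * n) ^ e with hy_def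
  have hx0 : 0 ≤ x := Real.rpow_nonneg (by positivity) e
  have heinv : e = ((m : ℝ))⁻¹ := one_div _
  have hpow : ∀ c : ℝ, 0 ≤ c → (c ^ e) ^ m = c := by
    intro c hc0
    rw [heinv]
    exact Real.rpow_inv_natCast_pow hc0 hm.ne'
  have hxm : x ^ m = (1.5 : ℝ) * n := hpow _ (by positivity)
  have hym : y ^ m = (2 : ℝ) * n := hpow _ (by positivity)
  have hyx : y - x = ((2 : ℝ) ^ e - (1.5 : ℝ) ^ e) * (n : ℝ) ^ e := by
    rw [hx_def, hy_def, Real.mul_rpow (by norm_num) hn0.le,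
      Real.mul_rpow (by norm_num) hn0.le]
    ring
  have hgap : 1 < y - x := by
    rw [hyx]
    have hpos : 0 ≤ ((2 : ℝ) ^ e - (1.5 : ℝ) ^ e) * (n : ℝ) ^ e := by positivity
    have hpm : (((2 : ℝ) ^ e - (1.5 : ℝ) ^ e) * (n : ℝ) ^ e) ^ m
        = ((2 : ℝ) ^ e - (1.5 : ℝ) ^ e) ^ m * n := by
      rw [mul_pow, hpow _ hn0.le]
    have : 1 < (((2 : ℝ) ^ e - (1.5 : ℝ) ^ e) * (n : ℝ) ^ e) ^ m := by
      rw [hpm]; linarith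
    exact (one_lt_pow_iff_of_nonneg hpos hm.ne').mp this
  refine ⟨⌊x⌋₊ + 1, Nat.succ_pos _, ?_, ?_⟩
  · have hax : x < ((⌊x⌋₊ + 1 : ℕ) : ℝ) := by
      push_cast
      exact Nat.lt_floor_add_one x
    have h1 : x ^ m < ((⌊x⌋₊ + 1 : ℕ) : ℝ) ^ m :=
      pow_lt_pow_left₀ hax hx0 hm.ne'
    rw [hxm] at h1
    have : (3 : ℝ) * n < 2 * ((⌊x⌋₊ + 1 : ℕ) : ℝ) ^ m := by linarith
    exact_mod_cast this
  · have hay : ((⌊x⌋₊ + 1 : ℕ) : ℝ) < y := by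
      push_cast
      have := Nat.floor_le hx0
      linarith
    have h2 : ((⌊x⌋₊ + 1 : ℕ) : ℝ) ^ m < y ^ m :=
      pow_lt_pow_left₀ hay (by positivity) hm.ne'
    rw [hym] at h2
    have : (2 : ℝ) * ((⌊x⌋₊ + 1 : ℕ) : ℝ) ^ m < 4 * n := by linarith
    exact_mod_cast this
end
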